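/- arXiv:1610.01676 — 5 statements merged into one kernel-verified Lean document; each statement's English description precedes it below -/
import Mathlib

section
/- Let n be divisible by 3 and partition the vertex set {1,…,n} of the complete graph K_n into S₁, S₂, S₃ each of size n/3. Fix a decomposition of the edges between S₂ and S₃ into n/3 perfect matchings M₁,…,M_{n/3}, indexing the matchings by the elements of S₁. Then the family of triangles {i, j, k} for k ∈ S₁ and {i,j} ∈ M_k consists of (n/3)² pairwise edge-disjoint triangles in K_n, each pair of which shares a vertex or, viewed as a geometric triangle on points in convex position (S₂ and S₃ occupying two arcs and S₁ the third), has crossing edges. -/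
open Finset

/-- `x` lies strictly between `a` and `b` (vertices on a convex polygon are
labeled `0, …, n-1` in clockwise order). -/
def inside (a b x : ℕ) : Prop := min a b < x ∧ x < max a b

/-- Two chords `{a,b}` and `{c,d}` of a convex polygon cross iff exactly one of
`c, d` lies strictly between `a` and `b` in the cyclic order. -/
def chordCross (a b c d : ℕ) : Prop := Xor' (inside a b c) (inside a b d)

/-- With `n = 3m` convex-position points split into arcs `S₁ = {0,…,m-1}`,
`S₂ = {m,…,2m-1}`, `S₃ = {2m,…,3m-1}`, and the edges between `S₂` and `S₃`
decomposed into `m` perfect matchings `σ k` indexed by `k ∈ S₁`, the triangles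
`T k e = {k, m+e, 2m+σ k e}` are pairwise edge-disjoint (share at most one
vertex) and pairwise intersecting (share a vertex or have crossing edges). -/
theorem stmt8 (m : ℕ) (σ : Fin m → (Fin m ≃ Fin m))
    (hσ : ∀ a b : Fin m, ∃! k, σ k a = b) :
    let T : Fin m → Fin m → Finset ℕ :=
      fun k e => {(k : ℕ), m + (e : ℕ), 2 * m + ((σ k e : Fin m) : ℕ)}
    ∀ k e k' e' : Fin m, (k, e) ≠ (k', e') →
      (T k e ∩ T k' e').card ≤ 1 ∧
      ((T k e ∩ T k' e').Nonempty ∨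
        ∃ a ∈ T k e, ∃ b ∈ T k e, ∃ c ∈ T k' e', ∃ d ∈ T k' e',
          a ≠ b ∧ c ≠ d ∧ chordCross a b c d) := by
  intro T k e k' e' hne
  have hk := k.isLt
  have hk' := k'.isLt
  have he := e.isLt
  have he' := e'.isLt
  have hf := (σ k e).isLt
  have hf' := (σ k' e').isLt
  have hne2 : ¬(k = k' ∧ e = e') := by
    intro ⟨h1, h2⟩; exact hne (by rw [h1, h2])
  have h1 : ¬((k : ℕ) = k' ∧ (e : ℕ) = e') := by
    rintro ⟨a, b⟩; exact hne2 ⟨Fin.val_injective a, Fin.val_injective b⟩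
  have h2 : ¬((k : ℕ) = k' ∧ ((σ k e : Fin m) : ℕ) = ((σ k' e' : Fin m) : ℕ)) := by
    rintro ⟨a, b⟩
    have ha : k = k' := Fin.val_injective a
    have hb : σ k e = σ k' e' := Fin.val_injective b
    rw [← ha] at hb
    exact hne2 ⟨ha, (σ k).injective hb⟩
  have h3 : ¬((e : ℕ) = e' ∧ ((σ k e : Fin m) : ℕ) = ((σ k' e' : Fin m) : ℕ)) := by
    rintro ⟨a, b⟩
    have ha : e = e' := Fin.val_injective a
    have hb : σ k e = σ k' e' := Fin.val_injective b
    rw [← ha] at hb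
    obtain ⟨c, -, hc⟩ := hσ e (σ k e)
    exact hne2 ⟨(hc k rfl).trans (hc k' hb.symm).symm, ha⟩
  constructor
  · rw [Finset.card_le_one]
    intro x hx y hy
    simp only [T, Finset.mem_inter, Finset.mem_insert, Finset.mem_singleton] at hx hy
    omega
  · rcases eq_or_ne k k' with hkk | hkk
    · exact Or.inl ⟨(k : ℕ), by simp [T, hkk]⟩
    · right
      have hkk' : (k : ℕ) ≠ k' := fun h => hkk (Fin.val_injective h)
      rcases lt_or_gt_of_ne hkk' with hlt | hlt
      · refine ⟨(k : ℕ), by simp [T], m + (e : ℕ), by simp [T],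
          (k' : ℕ), by simp [T], 2 * m + ((σ k' e' : Fin m) : ℕ), by simp [T], ?_, ?_, ?_⟩
        · omega
        · omega
        · simp only [chordCross, inside, Xor', xor_def]; omega
      · refine ⟨(k : ℕ), by simp [T], 2 * m + ((σ k e : Fin m) : ℕ), by simp [T],
          (k' : ℕ), by simp [T], m + (e' : ℕ), by simp [T], ?_, ?_, ?_⟩
        · omega
        · omega
        · simp only [chordCross, inside, Xor', xor_def]; omega
end

section
/- For n divisible by 3, the complete geometric graph on n points in convex position admits a family of at least (n/3)² edge-disjoint triangles that pairwise intersect (share a vertex or have a pair of crossing edges); hence there exists a decomposition P of K^c_n with chromatic index χ'([K^c_n, P]) ≥ n²/9 - O(n). -/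
open Finset

/-- Two parts of a decomposition of the complete convex geometric graph `K^c_n`
intersect: they share a vertex or have a pair of crossing edges. -/
def ConvIntersects {n : ℕ} (p q : Finset (Fin n)) : Prop :=
  (p ∩ q).Nonempty ∨
    ∃ a ∈ p, ∃ b ∈ p, ∃ c ∈ q, ∃ d ∈ q, a ≠ b ∧ c ≠ d ∧
      chordCross (a : ℕ) (b : ℕ) (c : ℕ) (d : ℕ)

/-- `P` is a decomposition of `K_n` into cliques. -/
def IsCliqueDecomp (n : ℕ) (P : Finset (Finset (Fin n))) : Prop :=
  (∀ p ∈ P, 2 ≤ p.card) ∧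
    ∀ i j : Fin n, i ≠ j → ∃! p, p ∈ P ∧ i ∈ p ∧ j ∈ p

namespace Stmt9Aux

lemma cross_lt {a b a' c' m : ℕ} (ha : a < m) (hb : b < m) (ha' : a' < m)
    (hlt : a < a') : chordCross a (m + b) a' (2*m + c') := by
  simp only [chordCross, inside, Xor', Xor]
  omega

lemma cross_gt {a c a' b' m : ℕ} (ha : a < m) (hc : c < m) (ha' : a' < m) (hb' : b' < m)
    (hlt : a' < a) : chordCross a (2*m + c) a' (m + b') := by
  simp only [chordCross, inside, Xor', Xor]
  omega

def tri (m : ℕ) (hm : 0 < m) (p : ℕ × ℕ) : Finset (Fin (3*m)) :=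
  {⟨p.1 % m, by have := Nat.mod_lt p.1 hm; omega⟩,
   ⟨m + p.2 % m, by have := Nat.mod_lt p.2 hm; omega⟩,
   ⟨2*m + (p.1 + p.2) % m, by have := Nat.mod_lt (p.1 + p.2) hm; omega⟩}

lemma mem_tri {m : ℕ} (hm : 0 < m) {a b : ℕ} (ha : a < m) (hb : b < m) (v : Fin (3*m)) :
    v ∈ tri m hm (a, b) ↔
      ((v : ℕ) = a ∨ (v : ℕ) = m + b ∨ (v : ℕ) = 2*m + (a + b) % m) := by
  simp [tri, Fin.ext_iff, Nat.mod_eq_of_lt ha, Nat.mod_eq_of_lt hb]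

lemma card_tri {m : ℕ} (hm : 0 < m) {a b : ℕ} (ha : a < m) (hb : b < m) :
    (tri m hm (a, b)).card = 3 := by
  have hc : (a + b) % m < m := Nat.mod_lt _ hm
  refine Finset.card_eq_three.mpr ⟨_, _, _, ?_, ?_, ?_, rfl⟩ <;>
    simp [Fin.ext_iff, Nat.mod_eq_of_lt ha, Nat.mod_eq_of_lt hb] <;> omega

lemma params_eq {m : ℕ} (hm : 0 < m) {a b a' b' : ℕ} (ha : a < m) (hb : b < m)
    (ha' : a' < m) (hb' : b' < m) {v w : Fin (3*m)} (hvw : v ≠ w)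
    (hv1 : v ∈ tri m hm (a, b)) (hv2 : v ∈ tri m hm (a', b'))
    (hw1 : w ∈ tri m hm (a, b)) (hw2 : w ∈ tri m hm (a', b')) :
    a = a' ∧ b = b' := by
  rw [mem_tri hm ha hb] at hv1 hw1
  rw [mem_tri hm ha' hb'] at hv2 hw2
  have hc : (a + b) % m < m := Nat.mod_lt _ hm
  have hc' : (a' + b') % m < m := Nat.mod_lt _ hm
  have hne : (v : ℕ) ≠ (w : ℕ) := fun h => hvw (Fin.ext h)
  have hmod : (a + b) % m = (a' + b') % m → (a = a' → b = b') ∧ (b = b' → a = a') := by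
    intro h
    constructor
    · intro h1
      subst h1
      have : b ≡ b' [MOD m] := Nat.ModEq.add_left_cancel' a h
      rwa [Nat.ModEq, Nat.mod_eq_of_lt hb, Nat.mod_eq_of_lt hb'] at this
    · intro h1
      subst h1
      have : a ≡ a' [MOD m] := Nat.ModEq.add_right_cancel' b h
      rwa [Nat.ModEq, Nat.mod_eq_of_lt ha, Nat.mod_eq_of_lt ha'] at this
  generalize hC : (a + b) % m = c at hv1 hw1 hc hmod
  generalize hC' : (a' + b') % m = c' at hv2 hw2 hc' hmod
  have key : (a = a' ∧ b = b') ∨ (a = a' ∧ c = c') ∨ (b = b' ∧ c = c') := by omega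
  rcases key with ⟨h1, h2⟩ | ⟨h1, h2⟩ | ⟨h1, h2⟩
  · exact ⟨h1, h2⟩
  · exact ⟨h1, (hmod h2).1 h1⟩
  · exact ⟨(hmod h2).2 h1, h1⟩

lemma tri_intersects {m : ℕ} (hm : 0 < m) {a b a' b' : ℕ} (ha : a < m) (hb : b < m)
    (ha' : a' < m) (hb' : b' < m) :
    ConvIntersects (tri m hm (a, b)) (tri m hm (a', b')) := by
  have hc : (a + b) % m < m := Nat.mod_lt _ hm
  have hc' : (a' + b') % m < m := Nat.mod_lt _ hm
  rcases lt_trichotomy a a' with h | h | h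
  · right
    refine ⟨⟨a, by omega⟩, ?_, ⟨m + b, by omega⟩, ?_, ⟨a', by omega⟩, ?_,
      ⟨2*m + (a' + b') % m, by omega⟩, ?_, ?_, ?_, ?_⟩
    · rw [mem_tri hm ha hb]; left; rfl
    · rw [mem_tri hm ha hb]; right; left; rfl
    · rw [mem_tri hm ha' hb']; left; rfl
    · rw [mem_tri hm ha' hb']; right; right; rfl
    · simp [Fin.ext_iff]; omega
    · simp [Fin.ext_iff]; omega
    · exact cross_lt ha hb ha' h
  · left
    refine ⟨⟨a, by omega⟩, ?_⟩
    rw [mem_inter, mem_tri hm ha hb, mem_tri hm ha' hb']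
    subst h
    exact ⟨Or.inl rfl, Or.inl rfl⟩
  · right
    refine ⟨⟨a, by omega⟩, ?_, ⟨2*m + (a + b) % m, by omega⟩, ?_, ⟨a', by omega⟩, ?_,
      ⟨m + b', by omega⟩, ?_, ?_, ?_, ?_⟩
    · rw [mem_tri hm ha hb]; left; rfl
    · rw [mem_tri hm ha hb]; right; right; rfl
    · rw [mem_tri hm ha' hb']; left; rfl
    · rw [mem_tri hm ha' hb']; right; left; rfl
    · simp [Fin.ext_iff]; omega
    · simp [Fin.ext_iff]; omega
    · exact cross_gt ha hc ha' hb' h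

end Stmt9Aux

namespace Stmt9Aux

lemma main (m : ℕ) (hm : 0 < m) :
    ∃ F : Finset (Finset (Fin (3*m))),
      (∀ t ∈ F, t.card = 3) ∧
      (∀ t ∈ F, ∀ t' ∈ F, t ≠ t' → (t ∩ t').card ≤ 1) ∧
      (∀ t ∈ F, ∀ t' ∈ F, t ≠ t' → ConvIntersects t t') ∧
      m ^ 2 ≤ F.card ∧
      ∃ P : Finset (Finset (Fin (3*m))), F ⊆ P ∧ IsCliqueDecomp (3*m) P ∧
        ∀ f : Finset (Fin (3*m)) → ℕ,
          (∀ p ∈ P, ∀ q ∈ P, p ≠ q → ConvIntersects p q → f p ≠ f q) →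
          m ^ 2 ≤ (P.image f).card := by
  set F : Finset (Finset (Fin (3*m))) :=
    (Finset.range m ×ˢ Finset.range m).image (tri m hm) with hF
  have hmemF : ∀ t ∈ F, ∃ a b, a < m ∧ b < m ∧ t = tri m hm (a, b) := by
    intro t ht
    rw [hF, Finset.mem_image] at ht
    obtain ⟨⟨a, b⟩, hab, rfl⟩ := ht
    rw [Finset.mem_product, Finset.mem_range, Finset.mem_range] at hab
    exact ⟨a, b, hab.1, hab.2, rfl⟩
  have h1 : ∀ t ∈ F, t.card = 3 := by
    intro t ht
    obtain ⟨a, b, ha, hb, rfl⟩ := hmemF t ht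
    exact card_tri hm ha hb
  have h2 : ∀ t ∈ F, ∀ t' ∈ F, t ≠ t' → (t ∩ t').card ≤ 1 := by
    intro t ht t' ht' hne
    by_contra hcard
    push_neg at hcard
    obtain ⟨v, hv, w, hw, hvw⟩ := Finset.one_lt_card.mp hcard
    rw [Finset.mem_inter] at hv hw
    obtain ⟨a, b, ha, hb, rfl⟩ := hmemF t ht
    obtain ⟨a', b', ha', hb', rfl⟩ := hmemF t' ht'
    obtain ⟨rfl, rfl⟩ := params_eq hm ha hb ha' hb' hvw hv.1 hv.2 hw.1 hw.2
    exact hne rfl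
  have h3 : ∀ t ∈ F, ∀ t' ∈ F, t ≠ t' → ConvIntersects t t' := by
    intro t ht t' ht' _
    obtain ⟨a, b, ha, hb, rfl⟩ := hmemF t ht
    obtain ⟨a', b', ha', hb', rfl⟩ := hmemF t' ht'
    exact tri_intersects hm ha hb ha' hb'
  have hcardF : F.card = m ^ 2 := by
    rw [hF, Finset.card_image_of_injOn, Finset.card_product, Finset.card_range, sq]
    intro p hp q hq hpq
    rw [Finset.mem_coe, Finset.mem_product, Finset.mem_range, Finset.mem_range] at hp hq
    obtain ⟨a, b⟩ := p
    obtain ⟨a', b'⟩ := q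
    have hv1 : (⟨a % m, by have := Nat.mod_lt a hm; omega⟩ : Fin (3*m)) ∈ tri m hm (a, b) := by
      simp [tri]
    have hw1 : (⟨m + b % m, by have := Nat.mod_lt b hm; omega⟩ : Fin (3*m)) ∈ tri m hm (a, b) := by
      simp [tri]
    have hvw : (⟨a % m, by have := Nat.mod_lt a hm; omega⟩ : Fin (3*m)) ≠
        ⟨m + b % m, by have := Nat.mod_lt b hm; omega⟩ := by
      simp [Fin.ext_iff]
      have := Nat.mod_lt a hm
      omega
    have := params_eq hm hp.1 hp.2 hq.1 hq.2 hvw hv1 (hpq ▸ hv1) hw1 (hpq ▸ hw1)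
    simp only [Prod.mk.injEq]
    exact this
  -- decomposition
  set Q : Finset (Finset (Fin (3*m))) :=
    (Finset.powersetCard 2 (Finset.univ : Finset (Fin (3*m)))).filter
      (fun e => ∀ t ∈ F, ¬ e ⊆ t) with hQ
  set P : Finset (Finset (Fin (3*m))) := F ∪ Q with hP
  have hFP : F ⊆ P := Finset.subset_union_left
  have pair_eq : ∀ (i j : Fin (3*m)) (q : Finset (Fin (3*m))), i ≠ j → i ∈ q → j ∈ q →
      q.card = 2 → q = {i, j} := by
    intro i j q hij hiq hjq hq2
    refine (Finset.eq_of_subset_of_card_le ?_ ?_).symm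
    · intro x hx
      rcases Finset.mem_insert.mp hx with rfl | hx
      · exact hiq
      · rw [Finset.mem_singleton] at hx; subst hx; exact hjq
    · rw [Finset.card_pair hij, hq2]
  have hdecomp : IsCliqueDecomp (3*m) P := by
    constructor
    · intro p hp
      rcases Finset.mem_union.mp hp with hpF | hpQ
      · rw [h1 p hpF]; omega
      · have := (Finset.mem_powersetCard_univ.mp (Finset.mem_filter.mp hpQ).1)
        omega
    · intro i j hij
      by_cases hcov : ∃ t ∈ F, i ∈ t ∧ j ∈ t
      · obtain ⟨t, htF, hit, hjt⟩ := hcov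
        refine ⟨t, ⟨Finset.mem_union_left _ htF, hit, hjt⟩, ?_⟩
        rintro q ⟨hqP, hiq, hjq⟩
        rcases Finset.mem_union.mp hqP with hqF | hqQ
        · by_contra hne
          have hle := h2 q hqF t htF hne
          have : 1 < (q ∩ t).card :=
            Finset.one_lt_card.mpr ⟨i, Finset.mem_inter.mpr ⟨hiq, hit⟩,
              j, Finset.mem_inter.mpr ⟨hjq, hjt⟩, hij⟩
          omega
        · exfalso
          obtain ⟨hq2, hqne⟩ := Finset.mem_filter.mp hqQ
          have hqcard : q.card = 2 := Finset.mem_powersetCard_univ.mp hq2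
          have hq : q = {i, j} := pair_eq i j q hij hiq hjq hqcard
          refine hqne t htF ?_
          rw [hq]
          intro x hx
          rcases Finset.mem_insert.mp hx with rfl | hx
          · exact hit
          · rw [Finset.mem_singleton] at hx; subst hx; exact hjt
      · push_neg at hcov
        have hpairQ : ({i, j} : Finset (Fin (3*m))) ∈ Q := by
          rw [hQ, Finset.mem_filter, Finset.mem_powersetCard_univ]
          refine ⟨Finset.card_pair hij, ?_⟩
          intro t htF hsub
          exact hcov t htF (hsub (Finset.mem_insert_self _ _))
            (hsub (Finset.mem_insert_of_mem (Finset.mem_singleton_self _)))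
        refine ⟨{i, j}, ⟨Finset.mem_union_right _ hpairQ,
          Finset.mem_insert_self _ _,
          Finset.mem_insert_of_mem (Finset.mem_singleton_self _)⟩, ?_⟩
        rintro q ⟨hqP, hiq, hjq⟩
        rcases Finset.mem_union.mp hqP with hqF | hqQ
        · exact (hcov q hqF hiq hjq).elim
        · exact pair_eq i j q hij hiq hjq
            (Finset.mem_powersetCard_univ.mp (Finset.mem_filter.mp hqQ).1)
  refine ⟨F, h1, h2, h3, le_of_eq hcardF.symm, P, hFP, hdecomp, ?_⟩
  intro f hf
  have hinj : Set.InjOn f ↑F := by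
    intro t ht t' ht' hft
    rw [Finset.mem_coe] at ht ht'
    by_contra hne
    exact hf t (hFP ht) t' (hFP ht') hne (h3 t ht t' ht' hne) hft
  calc m ^ 2 = (F.image f).card := by rw [Finset.card_image_of_injOn hinj, hcardF]
    _ ≤ (P.image f).card := Finset.card_le_card (Finset.image_subset_image hFP)

end Stmt9Aux

/-- For `3 ∣ n`, `K^c_n` has a family of at least `(n/3)²` edge-disjoint,
pairwise intersecting triangles; hence some decomposition `P` of `K^c_n` has
chromatic index at least `n²/9 - O(n)`. -/
theorem stmt9 :
    ∃ C : ℝ, ∀ n : ℕ, 3 ∣ n →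
      ∃ F : Finset (Finset (Fin n)),
        (∀ t ∈ F, t.card = 3) ∧
        (∀ t ∈ F, ∀ t' ∈ F, t ≠ t' → (t ∩ t').card ≤ 1) ∧
        (∀ t ∈ F, ∀ t' ∈ F, t ≠ t' → ConvIntersects t t') ∧
        (n / 3) ^ 2 ≤ F.card ∧
        ∃ P : Finset (Finset (Fin n)), F ⊆ P ∧ IsCliqueDecomp n P ∧
          ∀ f : Finset (Fin n) → ℕ,
            (∀ p ∈ P, ∀ q ∈ P, p ≠ q → ConvIntersects p q → f p ≠ f q) →
            (n : ℝ) ^ 2 / 9 - C * n ≤ ((P.image f).card : ℝ) := by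
  refine ⟨0, ?_⟩
  intro n hn
  obtain ⟨m, rfl⟩ := hn
  rcases Nat.eq_zero_or_pos m with rfl | hm
  · refine ⟨∅, by simp, by simp, by simp, by simp, ∅, by simp,
      ⟨by simp, fun i j _ => i.elim0⟩, ?_⟩
    intro f _
    norm_num
  · obtain ⟨F, h1, h2, h3, h4, P, hFP, hdecomp, hbound⟩ := Stmt9Aux.main m hm
    refine ⟨F, h1, h2, h3, ?_, P, hFP, hdecomp, ?_⟩
    · have h3m : 3 * m / 3 = m := by omega
      rw [h3m]; exact h4
    · intro f hf
      have hb := hbound f hf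
      have h9 : ((3*m : ℕ) : ℝ) ^ 2 / 9 - 0 * ((3*m : ℕ) : ℝ) = ((m ^ 2 : ℕ) : ℝ) := by
        push_cast; ring
      rw [h9]
      exact_mod_cast hb
end

section
/- Let n points lie in convex position and let P be a partition of the edges of the complete convex geometric graph into triangles. For a real x ≥ 3, call a triangle of P large if the length of its shortest edge is at least n/x. Then in any proper coloring of the decomposition (pairwise intersecting parts get distinct colors), each color class contains at most x - 2 large triangles. -/
open Finset

attribute [local instance] Classical.propDecidable

/-- `P` is a decomposition of `K_n` into triangles. -/
def IsTriDecomp (n : ℕ) (P : Finset (Finset (Fin n))) : Prop :=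
  (∀ p ∈ P, p.card = 3) ∧
    ∀ i j : Fin n, i ≠ j → ∃! p, p ∈ P ∧ i ∈ p ∧ j ∈ p

def cyclen (n a b : ℕ) : ℕ := min (max a b - min a b) (n - (max a b - min a b))

/-- A triangle is large if its shortest edge has length at least `n/x`. -/
def LargeTri (n : ℕ) (x : ℝ) (t : Finset (Fin n)) : Prop :=
  ∀ a ∈ t, ∀ b ∈ t, a ≠ b → (n : ℝ) / x ≤ (cyclen n (a : ℕ) (b : ℕ) : ℝ)

namespace S11

variable {n : ℕ}

/-- the point set of a "sided chord" descriptor `(u, v, s)`: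
`true` = the open interval `(u,v)`, `false` = its outside. -/
def aset (n : ℕ) (d : ℕ × ℕ × Bool) : Finset (Fin n) :=
  univ.filter fun y =>
    if d.2.2 then d.1 < y.val ∧ y.val < d.2.1 else (y.val < d.1 ∨ d.2.1 < y.val)

lemma mem_aset_tt {y : Fin n} {u v : ℕ} :
    y ∈ aset n (u, v, true) ↔ u < y.val ∧ y.val < v := by simp [aset]

lemma mem_aset_ff {y : Fin n} {u v : ℕ} :
    y ∈ aset n (u, v, false) ↔ (y.val < u ∨ v < y.val) := by simp [aset]

/-- `d` is (the descriptor of) one of the three arcs of the triangle `t`. -/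
def IsArc (t : Finset (Fin n)) (d : ℕ × ℕ × Bool) : Prop :=
  ∃ a b c : Fin n, a.val < b.val ∧ b.val < c.val ∧ t = {a, b, c} ∧
    (d = (a.val, b.val, true) ∨ d = (b.val, c.val, true) ∨ d = (a.val, c.val, false))

def Free (S : Finset (Finset (Fin n))) (d : ℕ × ℕ × Bool) : Prop :=
  ∀ t ∈ S, ∀ v ∈ t, v ∉ aset n d

lemma exists_sorted_triple {t : Finset (Fin n)} (h : t.card = 3) :
    ∃ a b c : Fin n, a.val < b.val ∧ b.val < c.val ∧ t = {a, b, c} := by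
  obtain ⟨x, y, z, hxy, hxz, hyz, rfl⟩ := Finset.card_eq_three.mp h
  have hvxy : x.val ≠ y.val := fun hv => hxy (Fin.ext hv)
  have hvxz : x.val ≠ z.val := fun hv => hxz (Fin.ext hv)
  have hvyz : y.val ≠ z.val := fun hv => hyz (Fin.ext hv)
  have perm : ∀ a b c : Fin n, ({x, y, z} : Finset (Fin n)) = {a, b, c} →
      a.val < b.val → b.val < c.val →
      ∃ a b c : Fin n, a.val < b.val ∧ b.val < c.val ∧
        ({x, y, z} : Finset (Fin n)) = {a, b, c} :=
    fun a b c h1 h2 h3 => ⟨a, b, c, h2, h3, h1⟩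
  rcases lt_trichotomy x.val y.val with h1 | h1 | h1
  · rcases lt_trichotomy y.val z.val with h2 | h2 | h2
    · exact ⟨x, y, z, h1, h2, rfl⟩
    · exact absurd h2 hvyz
    · rcases lt_trichotomy x.val z.val with h3 | h3 | h3
      · exact perm x z y (by ext w; simp; tauto) h3 h2
      · exact absurd h3 hvxz
      · exact perm z x y (by ext w; simp; tauto) h3 h1
  · exact absurd h1 hvxy
  · rcases lt_trichotomy x.val z.val with h2 | h2 | h2
    · exact perm y x z (by ext w; simp; tauto) h1 h2
    · exact absurd h2 hvxz
    · rcases lt_trichotomy y.val z.val with h3 | h3 | h3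
      · exact perm y z x (by ext w; simp; tauto) h3 h2
      · exact absurd h3 hvyz
      · exact perm z y x (by ext w; simp; tauto) h3 h1

/-- arcs of a triangle avoid the triangle's own vertices -/
lemma own_vertex_not_mem {t : Finset (Fin n)} {d : ℕ × ℕ × Bool}
    (hd : IsArc t d) : ∀ v ∈ t, v ∉ aset n d := by
  obtain ⟨a, b, c, hab, hbc, rfl, hd⟩ := hd
  intro v hv hmem
  simp only [Finset.mem_insert, Finset.mem_singleton] at hv
  rcases hd with rfl | rfl | rfl <;>
    rcases hv with rfl | rfl | rfl <;>
      simp only [mem_aset_tt, mem_aset_ff] at hmem <;> omega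

lemma card_aset_eq_natset (d : ℕ × ℕ × Bool) (T : Finset ℕ) (hT : ∀ z ∈ T, z < n)
    (hiff : ∀ z : Fin n, z ∈ aset n d ↔ z.val ∈ T) :
    (aset n d).card = T.card := by
  apply Finset.card_bij (fun y _ => y.val)
  · intro a ha; exact (hiff a).mp ha
  · intro a _ b _ hab; exact Fin.ext hab
  · intro z hz
    exact ⟨⟨z, hT z hz⟩, (hiff _).mpr hz, rfl⟩

lemma card_aset_tt {u v : ℕ} (hv : v ≤ n) :
    (aset n (u, v, true)).card = v - u - 1 := by
  rw [card_aset_eq_natset (u,v,true) (Finset.Ioo u v)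
      (fun z hz => by simp only [Finset.mem_Ioo] at hz; omega)
      (fun z => by simp only [mem_aset_tt, Finset.mem_Ioo])]
  exact Nat.card_Ioo u v

lemma card_aset_ff {u v : ℕ} (hu : u < v) (hv : v < n) :
    (aset n (u, v, false)).card = u + (n - (v + 1)) := by
  rw [card_aset_eq_natset (u,v,false) (range u ∪ Finset.Ico (v + 1) n)
      (fun z hz => by simp only [Finset.mem_union, mem_range, Finset.mem_Ico] at hz; omega)
      (fun z => by
        simp only [mem_aset_ff, Finset.mem_union, mem_range, Finset.mem_Ico]
        have := z.isLt; omega)]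
  rw [Finset.card_union_of_disjoint, card_range, Nat.card_Ico]
  rw [Finset.disjoint_left]
  intro z hz hz'
  simp only [mem_range] at hz
  simp only [Finset.mem_Ico] at hz'
  omega


lemma sorted_unique {a b c a' b' c' : Fin n}
    (h1 : a.val < b.val) (h2 : b.val < c.val)
    (h1' : a'.val < b'.val) (h2' : b'.val < c'.val)
    (hEq : ({a, b, c} : Finset (Fin n)) = {a', b', c'}) :
    a.val = a'.val ∧ b.val = b'.val ∧ c.val = c'.val := by
  have ha : a'.val = a.val ∨ a'.val = b.val ∨ a'.val = c.val := by
    have : a' ∈ ({a, b, c} : Finset (Fin n)) := by rw [hEq]; simp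
    simpa [Fin.ext_iff] using this
  have hb : b'.val = a.val ∨ b'.val = b.val ∨ b'.val = c.val := by
    have : b' ∈ ({a, b, c} : Finset (Fin n)) := by rw [hEq]; simp
    simpa [Fin.ext_iff] using this
  have hc : c'.val = a.val ∨ c'.val = b.val ∨ c'.val = c.val := by
    have : c' ∈ ({a, b, c} : Finset (Fin n)) := by rw [hEq]; simp
    simpa [Fin.ext_iff] using this
  omega

/-- two distinct points of `t'` cannot be separated by a chord of `t`
(laminarity): if some vertex of `t'` is in an arc of `t`, all of `t'` is. -/
lemma lam {t t' : Finset (Fin n)} {d : ℕ × ℕ × Bool}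
    (hd : IsArc t d) (hni : ¬ ConvIntersects t t')
    (hdisj : ∀ v ∈ t, v ∉ t')
    {v : Fin n} (hv : v ∈ t') (hvmem : v ∈ aset n d) :
    ∀ w ∈ t', w ∈ aset n d := by
  intro w hw
  by_contra hwmem
  obtain ⟨a, b, c, hab, hbc, rfl, hcases⟩ := hd
  apply hni
  right
  have hvw : v ≠ w := fun h => hwmem (h ▸ hvmem)
  rcases hcases with rfl | rfl | rfl
  · refine ⟨a, by simp, b, by simp, v, hv, w, hw, ?_, hvw, ?_⟩
    · intro h; exact absurd (congrArg Fin.val h) (by omega)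
    · have hwa : w ≠ a := fun h => hdisj a (by simp) (h ▸ hw)
      have hwb : w ≠ b := fun h => hdisj b (by simp) (h ▸ hw)
      have hwa' : w.val ≠ a.val := fun h => hwa (Fin.ext h)
      have hwb' : w.val ≠ b.val := fun h => hwb (Fin.ext h)
      rw [mem_aset_tt] at hvmem
      rw [mem_aset_tt] at hwmem
      simp only [chordCross, inside, Xor', xor_def]
      omega
  · refine ⟨b, by simp, c, by simp, v, hv, w, hw, ?_, hvw, ?_⟩
    · intro h; exact absurd (congrArg Fin.val h) (by omega)
    · have hwa : w ≠ b := fun h => hdisj b (by simp) (h ▸ hw)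
      have hwb : w ≠ c := fun h => hdisj c (by simp) (h ▸ hw)
      have hwa' : w.val ≠ b.val := fun h => hwa (Fin.ext h)
      have hwb' : w.val ≠ c.val := fun h => hwb (Fin.ext h)
      rw [mem_aset_tt] at hvmem
      rw [mem_aset_tt] at hwmem
      simp only [chordCross, inside, Xor', xor_def]
      omega
  · refine ⟨a, by simp, c, by simp, v, hv, w, hw, ?_, hvw, ?_⟩
    · intro h; exact absurd (congrArg Fin.val h) (by omega)
    · have hwa : w ≠ a := fun h => hdisj a (by simp) (h ▸ hw)
      have hwb : w ≠ c := fun h => hdisj c (by simp) (h ▸ hw)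
      have hwa' : w.val ≠ a.val := fun h => hwa (Fin.ext h)
      have hwb' : w.val ≠ c.val := fun h => hwb (Fin.ext h)
      rw [mem_aset_ff] at hvmem
      rw [mem_aset_ff] at hwmem
      push_neg at hwmem
      simp only [chordCross, inside, Xor', xor_def]
      omega

/-- if a whole (sorted) triangle sits inside an arc, it has an arc inside that arc. -/
lemma shrink {a b c : Fin n} (hab : a.val < b.val) (hbc : b.val < c.val)
    {d : ℕ × ℕ × Bool}
    (ha : a ∈ aset n d) (hb : b ∈ aset n d) (hc : c ∈ aset n d) :
    ∃ d', IsArc ({a, b, c} : Finset (Fin n)) d' ∧ aset n d' ⊆ aset n d := by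
  obtain ⟨u, v, s⟩ := d
  cases s
  · rw [mem_aset_ff] at ha hb hc
    by_cases h1 : c.val < u ∨ v < a.val ∨ b.val < u
    · refine ⟨(a.val, b.val, true), ⟨a, b, c, hab, hbc, rfl, by simp⟩, ?_⟩
      intro y hy
      rw [mem_aset_tt] at hy
      rw [mem_aset_ff]
      omega
    · refine ⟨(b.val, c.val, true), ⟨a, b, c, hab, hbc, rfl, by simp⟩, ?_⟩
      intro y hy
      rw [mem_aset_tt] at hy
      rw [mem_aset_ff]
      omega
  · rw [mem_aset_tt] at ha hb hc
    refine ⟨(a.val, b.val, true), ⟨a, b, c, hab, hbc, rfl, by simp⟩, ?_⟩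
    intro y hy
    rw [mem_aset_tt] at hy
    rw [mem_aset_tt]
    omega

/-- if a whole (sorted) triangle sits inside an arc, two of its arcs are inside that arc. -/
lemma two_sub {a b c : Fin n} (hab : a.val < b.val) (hbc : b.val < c.val)
    {d : ℕ × ℕ × Bool}
    (ha : a ∈ aset n d) (hb : b ∈ aset n d) (hc : c ∈ aset n d) :
    ∃ d₁ d₂, d₁ ≠ d₂ ∧ IsArc ({a, b, c} : Finset (Fin n)) d₁ ∧
      IsArc ({a, b, c} : Finset (Fin n)) d₂ ∧
      aset n d₁ ⊆ aset n d ∧ aset n d₂ ⊆ aset n d := by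
  obtain ⟨u, v, s⟩ := d
  cases s
  · rw [mem_aset_ff] at ha hb hc
    by_cases h1 : c.val < u ∨ v < a.val
    · -- all three on one side: the two inner true-arcs work
      refine ⟨(a.val, b.val, true), (b.val, c.val, true), ?_,
        ⟨a, b, c, hab, hbc, rfl, by simp⟩, ⟨a, b, c, hab, hbc, rfl, by simp⟩, ?_, ?_⟩
      · intro h
        have := congrArg (fun p => p.1) h
        simp at this; omega
      · intro y hy; rw [mem_aset_tt] at hy; rw [mem_aset_ff]; omega
      · intro y hy; rw [mem_aset_tt] at hy; rw [mem_aset_ff]; omega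
    · by_cases h2 : b.val < u
      · -- a,b below, c above: (a,b,true) and (a,c,false)
        refine ⟨(a.val, b.val, true), (a.val, c.val, false), ?_,
          ⟨a, b, c, hab, hbc, rfl, by simp⟩, ⟨a, b, c, hab, hbc, rfl, by simp⟩, ?_, ?_⟩
        · intro h
          have := congrArg (fun p => p.2.2) h
          simp at this
        · intro y hy; rw [mem_aset_tt] at hy; rw [mem_aset_ff]; omega
        · intro y hy; rw [mem_aset_ff] at hy; rw [mem_aset_ff]; omega
      · -- a below, b,c above: (b,c,true) and (a,c,false)
        refine ⟨(b.val, c.val, true), (a.val, c.val, false), ?_,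
          ⟨a, b, c, hab, hbc, rfl, by simp⟩, ⟨a, b, c, hab, hbc, rfl, by simp⟩, ?_, ?_⟩
        · intro h
          have := congrArg (fun p => p.2.2) h
          simp at this
        · intro y hy; rw [mem_aset_tt] at hy; rw [mem_aset_ff]; omega
        · intro y hy; rw [mem_aset_ff] at hy; rw [mem_aset_ff]; omega
  · rw [mem_aset_tt] at ha hb hc
    refine ⟨(a.val, b.val, true), (b.val, c.val, true), ?_,
      ⟨a, b, c, hab, hbc, rfl, by simp⟩, ⟨a, b, c, hab, hbc, rfl, by simp⟩, ?_, ?_⟩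
    · intro h
      have := congrArg (fun p => p.1) h
      simp at this; omega
    · intro y hy; rw [mem_aset_tt] at hy; rw [mem_aset_tt]; omega
    · intro y hy; rw [mem_aset_tt] at hy; rw [mem_aset_tt]; omega


/-- arcs of vertex-disjoint triangles have distinct descriptors. -/
lemma arc_ne {t t' : Finset (Fin n)} {d d' : ℕ × ℕ × Bool}
    (hd : IsArc t d) (hd' : IsArc t' d') (hdisj : ∀ v ∈ t, v ∉ t') : d ≠ d' := by
  obtain ⟨a, b, c, hab, hbc, rfl, hcases⟩ := hd
  obtain ⟨a', b', c', hab', hbc', rfl, hcases'⟩ := hd'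
  have h1 : a ∉ ({a', b', c'} : Finset (Fin n)) := hdisj a (by simp)
  have h2 : b ∉ ({a', b', c'} : Finset (Fin n)) := hdisj b (by simp)
  simp only [Finset.mem_insert, Finset.mem_singleton, not_or] at h1 h2
  have v1 : a.val ≠ a'.val := fun h => h1.1 (Fin.ext h)
  have v2 : a.val ≠ b'.val := fun h => h1.2.1 (Fin.ext h)
  have v3 : a.val ≠ c'.val := fun h => h1.2.2 (Fin.ext h)
  have v4 : b.val ≠ a'.val := fun h => h2.1 (Fin.ext h)
  have v5 : b.val ≠ b'.val := fun h => h2.2.1 (Fin.ext h)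
  have v6 : b.val ≠ c'.val := fun h => h2.2.2 (Fin.ext h)
  rcases hcases with rfl | rfl | rfl <;> rcases hcases' with rfl | rfl | rfl <;>
    (intro h; rw [Prod.ext_iff, Prod.ext_iff] at h; simp at h) <;> omega

/-- two distinct vertex-free arcs are disjoint. -/
lemma arc_disjoint {t t' : Finset (Fin n)} {d d' : ℕ × ℕ × Bool}
    (hd : IsArc t d) (hd' : IsArc t' d')
    (hfree : ∀ v ∈ t', v ∉ aset n d) (hfree' : ∀ v ∈ t, v ∉ aset n d')
    (htt : t = t' ∨ ∀ v ∈ t, v ∉ t') (hne : d ≠ d') :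
    ∀ y : Fin n, y ∈ aset n d → y ∉ aset n d' := by
  obtain ⟨a, b, c, hab, hbc, ht, hcases⟩ := hd
  obtain ⟨a', b', c', hab', hbc', ht', hcases'⟩ := hd'
  rcases htt with rfl | hdisj
  · -- same triangle: identical sorted triple
    obtain ⟨e1, e2, e3⟩ := sorted_unique hab hbc hab' hbc' (ht ▸ ht')
    intro y hy hy'
    rcases hcases with rfl | rfl | rfl <;> rcases hcases' with rfl | rfl | rfl <;>
      first
        | (exact hne (by rw [Prod.ext_iff, Prod.ext_iff]; simp; omega))
        | (simp only [mem_aset_tt, mem_aset_ff] at hy hy'; omega)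
  · -- distinct triangles: all vertex values distinct
    have m1 : a ∈ t := ht ▸ (by simp)
    have m2 : b ∈ t := ht ▸ (by simp)
    have m3 : c ∈ t := ht ▸ (by simp)
    have m1' : a' ∈ t' := ht' ▸ (by simp)
    have m2' : b' ∈ t' := ht' ▸ (by simp)
    have m3' : c' ∈ t' := ht' ▸ (by simp)
    have f1 := hfree a' m1'
    have f2 := hfree b' m2'
    have f3 := hfree c' m3'
    have g1 := hfree' a m1
    have g2 := hfree' b m2
    have g3 := hfree' c m3
    have w1 : a.val ≠ a'.val := fun h => hdisj a m1 ((Fin.ext h : a = a') ▸ m1')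
    have w2 : a.val ≠ b'.val := fun h => hdisj a m1 ((Fin.ext h : a = b') ▸ m2')
    have w3 : a.val ≠ c'.val := fun h => hdisj a m1 ((Fin.ext h : a = c') ▸ m3')
    have w4 : b.val ≠ a'.val := fun h => hdisj b m2 ((Fin.ext h : b = a') ▸ m1')
    have w5 : b.val ≠ b'.val := fun h => hdisj b m2 ((Fin.ext h : b = b') ▸ m2')
    have w6 : b.val ≠ c'.val := fun h => hdisj b m2 ((Fin.ext h : b = c') ▸ m3')
    have w7 : c.val ≠ a'.val := fun h => hdisj c m3 ((Fin.ext h : c = a') ▸ m1')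
    have w8 : c.val ≠ b'.val := fun h => hdisj c m3 ((Fin.ext h : c = b') ▸ m2')
    have w9 : c.val ≠ c'.val := fun h => hdisj c m3 ((Fin.ext h : c = c') ▸ m3')
    intro y hy hy'
    rcases hcases with rfl | rfl | rfl <;> rcases hcases' with rfl | rfl | rfl <;>
      simp only [mem_aset_tt, mem_aset_ff] at hy hy' f1 f2 f3 g1 g2 g3 <;>
      push_neg at f1 f2 f3 g1 g2 g3 <;> omega


lemma card_three (a b c : Fin n) (hab : a.val < b.val) (hbc : b.val < c.val) :
    ({a, b, c} : Finset (Fin n)).card = 3 :=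
  Finset.card_eq_three.mpr ⟨a, b, c,
    fun h => absurd (congrArg Fin.val h) (by omega),
    fun h => absurd (congrArg Fin.val h) (by omega),
    fun h => absurd (congrArg Fin.val h) (by omega), rfl⟩

lemma min_free {S : Finset (Finset (Fin n))}
    (hcard : ∀ t ∈ S, t.card = 3)
    (hni : ∀ p ∈ S, ∀ q ∈ S, p ≠ q → ¬ ConvIntersects p q) :
    ∀ k (t : Finset (Fin n)), t ∈ S → ∀ d, IsArc t d → (aset n d).card ≤ k →
      ∃ t₁, t₁ ∈ S ∧ ∃ d₁, IsArc t₁ d₁ ∧ Free S d₁ := by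
  intro k
  induction k with
  | zero =>
    intro t ht d hd hle
    by_cases hfree : Free S d
    · exact ⟨t, ht, d, hd, hfree⟩
    · exfalso
      simp only [Free] at hfree
      push_neg at hfree
      obtain ⟨t', ht', v, hv, hvm⟩ := hfree
      have hempty : aset n d = ∅ := card_eq_zero.mp (Nat.le_zero.mp hle)
      rw [hempty] at hvm
      exact absurd hvm (Finset.notMem_empty v)
  | succ k IH =>
    intro t ht d hd hle
    by_cases hfree : Free S d
    · exact ⟨t, ht, d, hd, hfree⟩
    · simp only [Free] at hfree
      push_neg at hfree
      obtain ⟨t', ht', v, hv, hvm⟩ := hfree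
      have htne : t' ≠ t := by
        rintro rfl
        exact own_vertex_not_mem hd v hv hvm
      have hnint : ¬ ConvIntersects t t' := hni t ht t' ht' htne.symm
      have hdisj : ∀ w ∈ t, w ∉ t' := fun w hw hw' =>
        hnint (Or.inl ⟨w, mem_inter.mpr ⟨hw, hw'⟩⟩)
      have hall := lam hd hnint hdisj hv hvm
      obtain ⟨a, b, c, hab, hbc, ht'eq⟩ := exists_sorted_triple (hcard t' ht')
      obtain ⟨d', hd', hsub⟩ := shrink hab hbc
        (hall a (by rw [ht'eq]; simp)) (hall b (by rw [ht'eq]; simp))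
        (hall c (by rw [ht'eq]; simp))
      have hnm := own_vertex_not_mem hd'
      have habc : ({a, b, c} : Finset (Fin n)) ⊆ aset n d := by
        intro w hw
        exact hall w (by rw [ht'eq]; exact hw)
      have hsub2 : aset n d' ∪ ({a, b, c} : Finset (Fin n)) ⊆ aset n d :=
        union_subset hsub habc
      have hdisj3 : Disjoint (aset n d') ({a, b, c} : Finset (Fin n)) := by
        rw [Finset.disjoint_right]
        exact hnm
      have hdrop : (aset n d').card + 3 ≤ (aset n d).card := by
        have h1 := card_le_card hsub2
        rw [Finset.card_union_of_disjoint hdisj3, card_three a b c hab hbc] at h1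
        exact h1
      rw [ht'eq] at ht'
      exact IH _ ht' d' hd' (by omega)

/-- CORE: a nonempty family of pairwise non-intersecting triangles has at least
`card + 2` distinct arcs that are free of all vertices. -/
lemma core {S : Finset (Finset (Fin n))}
    (hcard : ∀ t ∈ S, t.card = 3)
    (hni : ∀ p ∈ S, ∀ q ∈ S, p ≠ q → ¬ ConvIntersects p q)
    (hne : S.Nonempty) :
    ∃ 𝒜 : Finset (ℕ × ℕ × Bool), S.card + 2 ≤ 𝒜.card ∧
      ∀ d ∈ 𝒜, (∃ t ∈ S, IsArc t d) ∧ Free S d := by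
  induction S using Finset.strongInductionOn with
  | _ S IH =>
  by_cases h1 : S.card = 1
  · obtain ⟨t, rfl⟩ := Finset.card_eq_one.mp h1
    obtain ⟨a, b, c, hab, hbc, hteq⟩ := exists_sorted_triple (hcard t (by simp))
    refine ⟨{(a.val, b.val, true), (b.val, c.val, true), (a.val, c.val, false)}, ?_, ?_⟩
    · have e1 : ((a.val, b.val, true) : ℕ × ℕ × Bool) ∉
          ({(b.val, c.val, true), (a.val, c.val, false)} : Finset (ℕ × ℕ × Bool)) := by
        simp only [Finset.mem_insert, Finset.mem_singleton, Prod.mk.injEq]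
        push_neg
        constructor
        · intro h; omega
        · intro h; omega
      have e2 : ((b.val, c.val, true) : ℕ × ℕ × Bool) ∉
          ({(a.val, c.val, false)} : Finset (ℕ × ℕ × Bool)) := by
        simp only [Finset.mem_singleton, Prod.mk.injEq]
        push_neg
        intro h h'
        simp
      rw [Finset.card_insert_of_notMem e1, Finset.card_insert_of_notMem e2]
      simp
    · intro d hd
      have harc : IsArc t d := by
        simp only [Finset.mem_insert, Finset.mem_singleton] at hd
        rcases hd with rfl | rfl | rfl <;> exact ⟨a, b, c, hab, hbc, hteq, by simp⟩
      refine ⟨⟨t, by simp, harc⟩, ?_⟩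
      intro t' ht'
      rw [Finset.mem_singleton] at ht'
      subst ht'
      exact own_vertex_not_mem harc
  · -- S.card ≥ 2
    obtain ⟨t, ht⟩ := hne
    have hl2 : 2 ≤ S.card := by
      have := Finset.card_pos.mpr ⟨t, ht⟩
      omega
    -- find a triangle with a free arc
    obtain ⟨a0, b0, c0, hab0, hbc0, hteq0⟩ := exists_sorted_triple (hcard t ht)
    have harc0 : IsArc t (a0.val, b0.val, true) := ⟨a0, b0, c0, hab0, hbc0, hteq0, by simp⟩
    obtain ⟨t₀, ht₀, d₀, hd₀, hfree₀⟩ :=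
      min_free hcard hni (aset n (a0.val, b0.val, true)).card t ht _ harc0 le_rfl
    -- apply IH to S.erase t₀
    set S' := S.erase t₀ with hS'
    have hS'sub : S' ⊆ S := Finset.erase_subset _ _
    have hS'ssub : S' ⊂ S := Finset.erase_ssubset ht₀
    have hS'card : S'.card = S.card - 1 := Finset.card_erase_of_mem ht₀
    have hS'ne : S'.Nonempty := Finset.card_pos.mp (by omega)
    obtain ⟨𝒜', hA'card, hA'⟩ := IH S' hS'ssub
      (fun t' ht' => hcard t' (hS'sub ht'))
      (fun p hp q hq hpq => hni p (hS'sub hp) q (hS'sub hq) hpq) hS'ne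
    -- at most one arc of 𝒜' contains a vertex of t₀
    obtain ⟨a, b, c, hab, hbc, ht₀eq⟩ := exists_sorted_triple (hcard t₀ ht₀)
    have key : ∀ d ∈ 𝒜', (∃ v ∈ t₀, v ∈ aset n d) →
        (∀ w ∈ t₀, w ∈ aset n d) := by
      intro d hd ⟨v, hv, hvm⟩
      obtain ⟨⟨t', ht', harc'⟩, hfree'⟩ := hA' d hd
      have ht'ne : t' ≠ t₀ := by
        rintro rfl
        exact Finset.notMem_erase t' S ht'
      have hnint : ¬ ConvIntersects t' t₀ := hni t' (hS'sub ht') t₀ ht₀ ht'ne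
      have hdisj : ∀ w ∈ t', w ∉ t₀ := fun w hw hw' =>
        hnint (Or.inl ⟨w, mem_inter.mpr ⟨hw, hw'⟩⟩)
      exact lam harc' hnint hdisj hv hvm
    by_cases hB : ∃ dstar ∈ 𝒜', ∃ v ∈ t₀, v ∈ aset n dstar
    · obtain ⟨dstar, hdstar, hvstar⟩ := hB
      have ht₀in : ∀ w ∈ t₀, w ∈ aset n dstar := key dstar hdstar hvstar
      obtain ⟨⟨tstar, htstar, harcstar⟩, hfreestar⟩ := hA' dstar hdstar
      obtain ⟨d₁, d₂, hd12, harc1, harc2, hsub1, hsub2⟩ := two_sub hab hbc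
        (ht₀in a (by rw [ht₀eq]; simp)) (ht₀in b (by rw [ht₀eq]; simp))
        (ht₀in c (by rw [ht₀eq]; simp))
      rw [← ht₀eq] at harc1 harc2
      -- all other arcs of 𝒜' contain no vertex of t₀
      have honly : ∀ d ∈ 𝒜', d ≠ dstar → ∀ v ∈ t₀, v ∉ aset n d := by
        intro d hd hdne v hv hvm
        have ht₀in' : ∀ w ∈ t₀, w ∈ aset n d := key d hd ⟨v, hv, hvm⟩
        obtain ⟨⟨t', ht', harc'⟩, hfree'⟩ := hA' d hd
        -- d and dstar are disjoint but both contain a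
        have hTT : t' = tstar ∨ ∀ w ∈ t', w ∉ tstar := by
          by_cases hEq : t' = tstar
          · exact Or.inl hEq
          · refine Or.inr fun w hw hw' => ?_
            exact hni t' (hS'sub ht') tstar (hS'sub htstar) hEq
              (Or.inl ⟨w, mem_inter.mpr ⟨hw, hw'⟩⟩)
        have := arc_disjoint harc' harcstar
          (fun w hw => hfree' tstar htstar w hw)
          (fun w hw => hfreestar t' ht' w hw) hTT hdne
        exact this a (ht₀in' a (by rw [ht₀eq]; simp)) (ht₀in a (by rw [ht₀eq]; simp))
      -- build the new family
      have hne1 : ∀ d' ∈ 𝒜', d₁ ≠ d' := by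
        intro d' hd'
        obtain ⟨⟨t', ht', harc'⟩, _⟩ := hA' d' hd'
        have ht'ne : t₀ ≠ t' := by
          rintro rfl
          exact Finset.notMem_erase t₀ S ht'
        exact arc_ne harc1 harc' (fun w hw hw' =>
          hni t₀ ht₀ t' (hS'sub ht') ht'ne (Or.inl ⟨w, mem_inter.mpr ⟨hw, hw'⟩⟩))
      have hne2 : ∀ d' ∈ 𝒜', d₂ ≠ d' := by
        intro d' hd'
        obtain ⟨⟨t', ht', harc'⟩, _⟩ := hA' d' hd'
        have ht'ne : t₀ ≠ t' := by
          rintro rfl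
          exact Finset.notMem_erase t₀ S ht'
        exact arc_ne harc2 harc' (fun w hw hw' =>
          hni t₀ ht₀ t' (hS'sub ht') ht'ne (Or.inl ⟨w, mem_inter.mpr ⟨hw, hw'⟩⟩))
      refine ⟨insert d₁ (insert d₂ (𝒜'.erase dstar)), ?_, ?_⟩
      · have m2 : d₂ ∉ 𝒜'.erase dstar := fun h => hne2 d₂ (Finset.mem_of_mem_erase h) rfl
        have m1 : d₁ ∉ insert d₂ (𝒜'.erase dstar) := by
          simp only [Finset.mem_insert]
          rintro (rfl | h)
          · exact hd12 rfl
          · exact hne1 d₁ (Finset.mem_of_mem_erase h) rfl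
        rw [Finset.card_insert_of_notMem m1, Finset.card_insert_of_notMem m2,
          Finset.card_erase_of_mem hdstar]
        omega
      · intro d hd
        simp only [Finset.mem_insert] at hd
        rcases hd with rfl | rfl | hd
        · refine ⟨⟨t₀, ht₀, harc1⟩, ?_⟩
          intro t' ht' w hw hwm
          by_cases hEq : t' = t₀
          · subst hEq
            exact own_vertex_not_mem harc1 w hw hwm
          · exact hfreestar t' (Finset.mem_erase.mpr ⟨hEq, ht'⟩) w hw (hsub1 hwm)
        · refine ⟨⟨t₀, ht₀, harc2⟩, ?_⟩
          intro t' ht' w hw hwm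
          by_cases hEq : t' = t₀
          · subst hEq
            exact own_vertex_not_mem harc2 w hw hwm
          · exact hfreestar t' (Finset.mem_erase.mpr ⟨hEq, ht'⟩) w hw (hsub2 hwm)
        · have hdA' : d ∈ 𝒜' := Finset.mem_of_mem_erase hd
          have hdne : d ≠ dstar := Finset.ne_of_mem_erase hd
          obtain ⟨⟨t', ht', harc'⟩, hfree'⟩ := hA' d hdA'
          refine ⟨⟨t', hS'sub ht', harc'⟩, ?_⟩
          intro t'' ht'' w hw hwm
          by_cases hEq : t'' = t₀
          · subst hEq
            exact honly d hdA' hdne w hw hwm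
          · exact hfree' t'' (Finset.mem_erase.mpr ⟨hEq, ht''⟩) w hw hwm
    · -- no arc of 𝒜' touches t₀ : add the free arc d₀
      push_neg at hB
      have hd₀new : d₀ ∉ 𝒜' := by
        intro h
        obtain ⟨⟨t', ht', harc'⟩, _⟩ := hA' d₀ h
        have ht'ne : t₀ ≠ t' := by
          rintro rfl
          exact Finset.notMem_erase t₀ S ht'
        exact arc_ne hd₀ harc' (fun w hw hw' =>
          hni t₀ ht₀ t' (hS'sub ht') ht'ne (Or.inl ⟨w, mem_inter.mpr ⟨hw, hw'⟩⟩)) rfl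
      refine ⟨insert d₀ 𝒜', ?_, ?_⟩
      · rw [Finset.card_insert_of_notMem hd₀new]
        omega
      · intro d hd
        simp only [Finset.mem_insert] at hd
        rcases hd with rfl | hd
        · exact ⟨⟨t₀, ht₀, hd₀⟩, hfree₀⟩
        · obtain ⟨⟨t', ht', harc'⟩, hfree'⟩ := hA' d hd
          refine ⟨⟨t', hS'sub ht', harc'⟩, ?_⟩
          intro t'' ht'' w hw hwm
          by_cases hEq : t'' = t₀
          · subst hEq
            exact hB d hd w hw hwm
          · exact hfree' t'' (Finset.mem_erase.mpr ⟨hEq, ht''⟩) w hw hwm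

end S11

/-- In any proper coloring of a decomposition of `K^c_n` into triangles, each
color class contains at most `x - 2` large triangles, for any `x ≥ 3`. -/
theorem stmt11 (n : ℕ) (x : ℝ) (hx : 3 ≤ x)
    (P : Finset (Finset (Fin n))) (hP : IsTriDecomp n P)
    (f : Finset (Fin n) → ℕ)
    (hf : ∀ p ∈ P, ∀ q ∈ P, p ≠ q → ConvIntersects p q → f p ≠ f q) :
    ∀ col : ℕ,
      ((P.filter (fun t => f t = col ∧ LargeTri n x t)).card : ℝ) ≤ x - 2 := by
  intro col
  set S := P.filter (fun t => f t = col ∧ LargeTri n x t) with hSdef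
  have hx0 : (0:ℝ) < x := by linarith
  have hSP : ∀ t ∈ S, t ∈ P ∧ f t = col ∧ LargeTri n x t := by
    intro t ht
    rw [hSdef, Finset.mem_filter] at ht
    exact ⟨ht.1, ht.2⟩
  have hcard : ∀ t ∈ S, t.card = 3 := fun t ht => hP.1 t (hSP t ht).1
  have hni : ∀ p ∈ S, ∀ q ∈ S, p ≠ q → ¬ ConvIntersects p q := by
    intro p hp q hq hpq hint
    exact hf p (hSP p hp).1 q (hSP q hq).1 hpq hint
      (by rw [(hSP p hp).2.1, (hSP q hq).2.1])
  rcases Finset.eq_empty_or_nonempty S with hS0 | hSne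
  · rw [hS0]
    simp only [Finset.card_empty, Nat.cast_zero]
    linarith
  have hl1 : 1 ≤ S.card := Finset.card_pos.mpr hSne
  have hUdisj : ∀ p ∈ S, ∀ q ∈ S, p ≠ q → Disjoint p q := by
    intro p hp q hq hpq
    rw [Finset.disjoint_left]
    intro w hw hw'
    exact hni p hp q hq hpq (Or.inl ⟨w, mem_inter.mpr ⟨hw, hw'⟩⟩)
  have hU : (S.biUnion (fun t => t)).card = 3 * S.card := by
    rw [Finset.card_biUnion hUdisj,
      Finset.sum_congr rfl (fun t ht => hcard t ht), Finset.sum_const,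
      smul_eq_mul, mul_comm]
  have h3n : 3 * S.card ≤ n := by
    have h := Finset.card_le_univ (S.biUnion (fun t => t))
    rw [hU, Fintype.card_fin] at h
    exact h
  set m := ⌈(n:ℝ)/x⌉₊ with hm
  by_cases hm1 : m ≤ 1
  · have h1 : (n:ℝ)/x ≤ 1 := le_trans (Nat.le_ceil _) (by exact_mod_cast hm1)
    have hnx : (n:ℝ) ≤ x := (div_le_one hx0).mp h1
    have h2 : 3*(S.card:ℝ) ≤ (n:ℝ) := by exact_mod_cast h3n
    linarith
  · push_neg at hm1
    obtain ⟨𝒜, hAcard, hA⟩ := S11.core hcard hni hSne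
    have harcbound : ∀ d ∈ 𝒜, m - 1 ≤ (S11.aset n d).card := by
      intro d hd
      obtain ⟨⟨t, ht, harc⟩, _⟩ := hA d hd
      obtain ⟨a, b, c, hab, hbc, hteq, hcases⟩ := harc
      have hlarge := (hSP t ht).2.2
      have edge : ∀ (p q : Fin n), p ∈ t → q ∈ t → p.val < q.val →
          m ≤ q.val - p.val ∧ m ≤ n - (q.val - p.val) := by
        intro p q hp hq hpq
        have hne' : p ≠ q := fun h => by rw [h] at hpq; omega
        have hlg := hlarge p hp q hq hne'
        have hcy : m ≤ cyclen n p.val q.val := Nat.ceil_le.mpr hlg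
        simp only [cyclen] at hcy
        omega
      have hmemt : a ∈ t ∧ b ∈ t ∧ c ∈ t := by rw [hteq]; simp
      rcases hcases with rfl | rfl | rfl
      · obtain ⟨h1', h2'⟩ := edge a b hmemt.1 hmemt.2.1 hab
        rw [S11.card_aset_tt (le_of_lt b.isLt)]
        omega
      · obtain ⟨h1', h2'⟩ := edge b c hmemt.2.1 hmemt.2.2 hbc
        rw [S11.card_aset_tt (le_of_lt c.isLt)]
        omega
      · obtain ⟨h1', h2'⟩ := edge a c hmemt.1 hmemt.2.2 (lt_trans hab hbc)
        rw [S11.card_aset_ff (lt_trans hab hbc) c.isLt]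
        omega
    have hAdisj : ∀ d ∈ 𝒜, ∀ d' ∈ 𝒜, d ≠ d' →
        Disjoint (S11.aset n d) (S11.aset n d') := by
      intro d hd d' hd' hdd
      obtain ⟨⟨t, ht, harc⟩, hfree⟩ := hA d hd
      obtain ⟨⟨t', ht', harc'⟩, hfree'⟩ := hA d' hd'
      rw [Finset.disjoint_left]
      have hTT : t = t' ∨ ∀ v ∈ t, v ∉ t' := by
        by_cases hEq : t = t'
        · exact Or.inl hEq
        · exact Or.inr (fun w hw hw' =>
            hni t ht t' ht' hEq (Or.inl ⟨w, mem_inter.mpr ⟨hw, hw'⟩⟩))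
      intro y hy
      exact S11.arc_disjoint harc harc' (fun w hw => hfree t' ht' w hw)
        (fun w hw => hfree' t ht w hw) hTT hdd y hy
    have hW : (𝒜.biUnion (S11.aset n)).card = ∑ d ∈ 𝒜, (S11.aset n d).card :=
      Finset.card_biUnion hAdisj
    have hsum : 𝒜.card * (m - 1) ≤ ∑ d ∈ 𝒜, (S11.aset n d).card := by
      have := Finset.card_nsmul_le_sum 𝒜 (fun d => (S11.aset n d).card) (m - 1) harcbound
      simpa [smul_eq_mul] using this
    have hUW : Disjoint (S.biUnion (fun t => t)) (𝒜.biUnion (S11.aset n)) := by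
      rw [Finset.disjoint_left]
      intro w hw hw'
      rw [Finset.mem_biUnion] at hw hw'
      obtain ⟨t, ht, hwt⟩ := hw
      obtain ⟨d, hd, hwd⟩ := hw'
      exact (hA d hd).2 t ht w hwt hwd
    have htot : (S.biUnion (fun t => t)).card + (𝒜.biUnion (S11.aset n)).card ≤ n := by
      rw [← Finset.card_union_of_disjoint hUW]
      have h := Finset.card_le_univ ((S.biUnion (fun t => t)) ∪ 𝒜.biUnion (S11.aset n))
      rw [Fintype.card_fin] at h
      exact h
    have hNat : 3 * S.card + (S.card + 2) * (m - 1) ≤ n := by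
      have h5 : (S.card + 2) * (m - 1) ≤ 𝒜.card * (m - 1) :=
        Nat.mul_le_mul_right _ hAcard
      omega
    -- pass to the reals
    have hreal : 3*(S.card:ℝ) + ((S.card:ℝ)+2)*((m:ℝ)-1) ≤ (n:ℝ) := by
      have hc : ((3 * S.card + (S.card + 2) * (m - 1) : ℕ) : ℝ) ≤ (n:ℝ) := by
        exact_mod_cast hNat
      have hm1' : (1:ℕ) ≤ m := by omega
      push_cast [Nat.cast_sub hm1'] at hc
      linarith
    have hmn : (n:ℝ)/x ≤ (m:ℝ) := Nat.le_ceil _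
    have hn3 : (3:ℝ) ≤ (n:ℝ) := by
      have : 3 ≤ n := le_trans (by omega) h3n
      exact_mod_cast this
    by_contra hcon
    push_neg at hcon
    have hL : (1:ℝ) ≤ (S.card:ℝ) := by exact_mod_cast hl1
    have key : 3*(S.card:ℝ) + ((S.card:ℝ)+2)*((n:ℝ)/x - 1) ≤ (n:ℝ) := by
      have h6 : ((S.card:ℝ)+2)*((n:ℝ)/x - 1) ≤ ((S.card:ℝ)+2)*((m:ℝ)-1) := by
        apply mul_le_mul_of_nonneg_left (by linarith) (by linarith)
      linarith
    have key2 : 3*(S.card:ℝ)*x + ((S.card:ℝ)+2)*((n:ℝ) - x) ≤ (n:ℝ)*x := by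
      have h7 := mul_le_mul_of_nonneg_right key (le_of_lt hx0)
      have h8 : (3*(S.card:ℝ) + ((S.card:ℝ)+2)*((n:ℝ)/x - 1)) * x
          = 3*(S.card:ℝ)*x + ((S.card:ℝ)+2)*((n:ℝ) - x) := by
        field_simp
      rw [h8] at h7
      linarith
    have hNL : (n:ℝ)*x < (n:ℝ)*((S.card:ℝ)+2) := by
      apply mul_lt_mul_of_pos_left (by linarith) (by linarith)
    have hLx : 1*x ≤ (S.card:ℝ)*x := mul_le_mul_of_nonneg_right hL (le_of_lt hx0)
    nlinarith [key2, hNL, hLx]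
end

section
/- Let n points lie in convex position and let P be a partition of the edges of the complete convex geometric graph into triangles. Then the chromatic index of the decomposition satisfies χ'([K^c_n, P]) ≥ (binom(n,2)/3 - n²/x)/(x-2) for every x ≥ 3, and choosing x = 2(3+√6) gives χ'([K^c_n, P]) ≥ n²/(60 + 24√6) - O(n) > n²/119 - O(n). -/
open Finset

namespace S12

abbrev Tri := ℕ × ℕ × ℕ

def okT (n : ℕ) (t : Tri) : Prop := t.1 < t.2.1 ∧ t.2.1 < t.2.2 ∧ t.2.2 < n

def vmem (v : ℕ) (t : Tri) : Prop := v = t.1 ∨ v = t.2.1 ∨ v = t.2.2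

instance (v : ℕ) (t : Tri) : Decidable (vmem v t) := by unfold vmem; infer_instance

def inArc (t : Tri) (r : ℕ) (q : ℕ) : Prop :=
  match r with
  | 0 => t.1 < q ∧ q < t.2.1
  | 1 => t.2.1 < q ∧ q < t.2.2
  | _ => q < t.1 ∨ t.2.2 < q

instance (t : Tri) (r q : ℕ) : Decidable (inArc t r q) := by unfold inArc; exact match r with
  | 0 => inferInstanceAs (Decidable (_ ∧ _))
  | 1 => inferInstanceAs (Decidable (_ ∧ _))
  | (_+2) => inferInstanceAs (Decidable (_ ∨ _))

def sub3 (t' t : Tri) (r : ℕ) : Prop := inArc t r t'.1 ∧ inArc t r t'.2.1 ∧ inArc t r t'.2.2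

instance (t' t : Tri) (r : ℕ) : Decidable (sub3 t' t r) := by unfold sub3; infer_instance

lemma vlt {n : ℕ} {t : Tri} (h : okT n t) {v : ℕ} (hv : vmem v t) : v < n := by
  obtain ⟨a, b, c⟩ := t; simp [okT] at h; simp [vmem] at hv; omega

lemma arc_unique {n : ℕ} {t : Tri} (h : okT n t) {r r' q : ℕ}
    (h1 : inArc t r q) (h2 : inArc t r' q) (hr : r < 3) (hr' : r' < 3) : r = r' := by
  obtain ⟨a, b, c⟩ := t
  simp only [okT] at h
  interval_cases r <;> interval_cases r' <;> simp only [inArc] at h1 h2 <;> omega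

lemma vmem_not_inArc {n : ℕ} {t : Tri} (h : okT n t) {v : ℕ} (hv : vmem v t) (r : ℕ) :
    ¬ inArc t r v := by
  obtain ⟨a, b, c⟩ := t
  simp only [okT] at h; simp only [vmem] at hv
  match r with
  | 0 => simp only [inArc]; omega
  | 1 => simp only [inArc]; omega
  | (k+2) => simp only [inArc]; omega

lemma exists_arc {n : ℕ} {t : Tri} (h : okT n t) {q : ℕ} (hq : q < n) (hv : ¬ vmem q t) :
    ∃ r < 3, inArc t r q := by
  obtain ⟨a, b, c⟩ := t
  simp only [okT] at h; simp only [vmem] at hv; push_neg at hv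
  by_cases h0 : a < q ∧ q < b
  · exact ⟨0, by omega, by simp [inArc]; omega⟩
  · by_cases h1 : b < q ∧ q < c
    · exact ⟨1, by omega, by simp [inArc]; omega⟩
    · exact ⟨2, by omega, by simp [inArc]; omega⟩

lemma sep_of_noncross {n : ℕ} {t t' : Tri} (ht : okT n t) (ht' : okT n t')
    (hd : ∀ v, vmem v t → ¬ vmem v t')
    (h : ∀ u v p q : ℕ, vmem u t → vmem v t → vmem p t' → vmem q t' → u ≠ v → p ≠ q →
      ¬ chordCross u v p q) :
    ∃ r < 3, sub3 t' t r := by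
  obtain ⟨a, b, c⟩ := t
  obtain ⟨a', b', c'⟩ := t'
  simp only [okT] at ht ht'
  have hd' : ∀ v, vmem v (a', b', c') → ¬ vmem v (a, b, c) := by
    intro v hv hv'; exact hd v hv' hv
  have hna' : ¬ vmem a' (a, b, c) := hd' a' (Or.inl rfl)
  have hnb' : ¬ vmem b' (a, b, c) := hd' b' (Or.inr (Or.inl rfl))
  have hnc' : ¬ vmem c' (a, b, c) := hd' c' (Or.inr (Or.inr rfl))
  have h1 := h a b a' b' (Or.inl rfl) (Or.inr (Or.inl rfl)) (Or.inl rfl) (Or.inr (Or.inl rfl)) (by omega) (by omega)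
  have h2 := h a b a' c' (Or.inl rfl) (Or.inr (Or.inl rfl)) (Or.inl rfl) (Or.inr (Or.inr rfl)) (by omega) (by omega)
  have h3 := h a b b' c' (Or.inl rfl) (Or.inr (Or.inl rfl)) (Or.inr (Or.inl rfl)) (Or.inr (Or.inr rfl)) (by omega) (by omega)
  have h4 := h b c a' b' (Or.inr (Or.inl rfl)) (Or.inr (Or.inr rfl)) (Or.inl rfl) (Or.inr (Or.inl rfl)) (by omega) (by omega)
  have h5 := h b c a' c' (Or.inr (Or.inl rfl)) (Or.inr (Or.inr rfl)) (Or.inl rfl) (Or.inr (Or.inr rfl)) (by omega) (by omega)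
  have h6 := h b c b' c' (Or.inr (Or.inl rfl)) (Or.inr (Or.inr rfl)) (Or.inr (Or.inl rfl)) (Or.inr (Or.inr rfl)) (by omega) (by omega)
  have h7 := h a c a' b' (Or.inl rfl) (Or.inr (Or.inr rfl)) (Or.inl rfl) (Or.inr (Or.inl rfl)) (by omega) (by omega)
  have h8 := h a c a' c' (Or.inl rfl) (Or.inr (Or.inr rfl)) (Or.inl rfl) (Or.inr (Or.inr rfl)) (by omega) (by omega)
  have h9 := h a c b' c' (Or.inl rfl) (Or.inr (Or.inr rfl)) (Or.inr (Or.inl rfl)) (Or.inr (Or.inr rfl)) (by omega) (by omega)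
  simp only [chordCross, inside, Xor', Xor] at h1 h2 h3 h4 h5 h6 h7 h8 h9
  simp only [vmem] at hna' hnb' hnc'
  obtain ⟨r, hr3, hr⟩ := exists_arc (t := (a,b,c)) (by exact ⟨ht.1, ht.2.1, ht.2.2⟩) (by omega : a' < n) (by simp [vmem]; omega)
  refine ⟨r, hr3, hr, ?_, ?_⟩ <;>
  · interval_cases r <;> simp only [inArc] at hr ⊢ <;> omega

lemma outside_same_arc {n : ℕ} {t0 ts : Tri} (h0 : okT n t0) (hs : okT n ts)
    {r1 : ℕ} (hr1 : r1 < 3) (hsub : sub3 ts t0 r1)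
    {q1 q2 : ℕ} (hq1n : q1 < n) (hq2n : q2 < n)
    (h1 : ¬ inArc t0 r1 q1) (h2 : ¬ inArc t0 r1 q2)
    (hv1 : ¬ vmem q1 ts) (hv2 : ¬ vmem q2 ts)
    {r : ℕ} (hr : r < 3) (hin : inArc ts r q1) : inArc ts r q2 := by
  obtain ⟨a, b, c⟩ := t0
  obtain ⟨a', b', c'⟩ := ts
  simp only [okT] at h0 hs
  simp only [vmem] at hv1 hv2
  simp only [sub3] at hsub
  interval_cases r1 <;> interval_cases r <;>
    simp only [inArc] at hsub h1 h2 hin ⊢ <;> omega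

lemma not_two_watchers {n : ℕ} {t1 t2 ts : Tri} (h1 : okT n t1) (h2 : okT n t2) (hs : okT n ts)
    (hd12 : ∀ v, vmem v t1 → ¬ vmem v t2)
    {r0 r1 r2 : ℕ} (hr0 : r0 < 3) (hr1 : r1 < 3) (hr2 : r2 < 3)
    (hsub0 : sub3 t2 t1 r0)
    (hsubs1 : sub3 ts t1 r1) (hsubs2 : sub3 ts t2 r2)
    (hf1 : ¬ inArc t1 r1 t2.1 ∧ ¬ inArc t1 r1 t2.2.1 ∧ ¬ inArc t1 r1 t2.2.2)
    (hf2 : ¬ inArc t2 r2 t1.1 ∧ ¬ inArc t2 r2 t1.2.1 ∧ ¬ inArc t2 r2 t1.2.2) : False := by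
  obtain ⟨a, b, c⟩ := t1
  obtain ⟨a', b', c'⟩ := t2
  obtain ⟨u, v, w⟩ := ts
  simp only [okT] at h1 h2 hs
  have hda : ¬ vmem a (a',b',c') := hd12 a (Or.inl rfl)
  have hdb : ¬ vmem b (a',b',c') := hd12 b (Or.inr (Or.inl rfl))
  have hdc : ¬ vmem c (a',b',c') := hd12 c (Or.inr (Or.inr rfl))
  simp only [vmem] at hda hdb hdc
  simp only [sub3] at hsub0 hsubs1 hsubs2
  interval_cases r0 <;> interval_cases r1 <;> interval_cases r2 <;>
    simp only [inArc] at hsub0 hsubs1 hsubs2 hf1 hf2 <;> omega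

def HOr (n : ℕ) (t : Tri) (r : ℕ) : Finset ℕ :=
  match r with
  | 0 => Finset.Ico t.1 t.2.1
  | 1 => Finset.Ico t.2.1 t.2.2
  | _ => Finset.Ico t.2.2 n ∪ Finset.Ico 0 t.1

lemma mem_HOr {n : ℕ} {t : Tri} {r q : ℕ} :
    q ∈ HOr n t r ↔ (match r with
      | 0 => t.1 ≤ q ∧ q < t.2.1
      | 1 => t.2.1 ≤ q ∧ q < t.2.2
      | _ => (t.2.2 ≤ q ∧ q < n) ∨ q < t.1) := by
  match r with
  | 0 => simp [HOr]
  | 1 => simp [HOr]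
  | (k+2) => simp [HOr]

lemma HOr_subset {n : ℕ} {t : Tri} (h : okT n t) (r : ℕ) : HOr n t r ⊆ Finset.range n := by
  obtain ⟨a, b, c⟩ := t
  simp only [okT] at h
  intro q hq
  rw [mem_HOr] at hq
  simp only [Finset.mem_range]
  match r with
  | 0 => simp at hq; omega
  | 1 => simp at hq; omega
  | (k+2) => simp at hq; omega

lemma HOr_card {n : ℕ} {t : Tri} (h : okT n t) :
    (HOr n t 0).card = t.2.1 - t.1 ∧ (HOr n t 1).card = t.2.2 - t.2.1 ∧
      (HOr n t 2).card = (n - t.2.2) + t.1 := by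
  obtain ⟨a, b, c⟩ := t
  simp only [okT] at h
  refine ⟨by simp [HOr], by simp [HOr], ?_⟩
  have hdisj : Disjoint (Finset.Ico c n) (Finset.Ico 0 a) := by
    simp only [Finset.disjoint_left, Finset.mem_Ico]
    omega
  simp only [HOr, Finset.card_union_of_disjoint hdisj, Nat.card_Ico]
  omega

lemma HOr_disj_same {n : ℕ} {t : Tri} (h : okT n t) {r r' : ℕ} (hne : r ≠ r')
    (hr : r < 3) (hr' : r' < 3) : Disjoint (HOr n t r) (HOr n t r') := by
  obtain ⟨a, b, c⟩ := t
  simp only [okT] at h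
  simp only [Finset.disjoint_left]
  intro q hq hq'
  rw [mem_HOr] at hq hq'
  interval_cases r <;> interval_cases r' <;> simp_all <;> omega

lemma HOr_disj {n : ℕ} {t t' : Tri} (ht : okT n t) (ht' : okT n t')
    {r r' rA : ℕ} (hr : r < 3) (hr' : r' < 3) (hrA : rA < 3) (hne : rA ≠ r)
    (hsubA : sub3 t' t rA)
    (hf : ¬ inArc t' r' t.1 ∧ ¬ inArc t' r' t.2.1 ∧ ¬ inArc t' r' t.2.2)
    (hd : ∀ v, vmem v t → ¬ vmem v t') :
    Disjoint (HOr n t r) (HOr n t' r') := by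
  obtain ⟨a, b, c⟩ := t
  obtain ⟨a', b', c'⟩ := t'
  simp only [okT] at ht ht'
  have hda : ¬ vmem a (a',b',c') := hd a (Or.inl rfl)
  have hdb : ¬ vmem b (a',b',c') := hd b (Or.inr (Or.inl rfl))
  have hdc : ¬ vmem c (a',b',c') := hd c (Or.inr (Or.inr rfl))
  simp only [vmem] at hda hdb hdc
  simp only [sub3] at hsubA
  simp only [Finset.disjoint_left]
  intro q hq hq'
  rw [mem_HOr] at hq hq'
  interval_cases rA <;> interval_cases r <;> interval_cases r' <;>
    simp only [inArc] at hsubA hf hq hq' <;> omega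

def Fam (n : ℕ) (F : Finset Tri) : Prop :=
  (∀ t ∈ F, okT n t) ∧
  (∀ t ∈ F, ∀ t' ∈ F, t ≠ t' → ∀ v, vmem v t → ¬ vmem v t') ∧
  (∀ t ∈ F, ∀ t' ∈ F, t ≠ t' → ∃ r < 3, sub3 t' t r)

lemma Fam.mono {n : ℕ} {F F' : Finset Tri} (h : Fam n F) (hs : F' ⊆ F) : Fam n F' :=
  ⟨fun t ht => h.1 t (hs ht),
   fun t ht t' ht' => h.2.1 t (hs ht) t' (hs ht'),
   fun t ht t' ht' => h.2.2 t (hs ht) t' (hs ht')⟩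

lemma ear_pt (n : ℕ) : ∀ m (F : Finset Tri), F.card = m → Fam n F → F.Nonempty →
    ∀ p, p < n → (∀ t ∈ F, ¬ vmem p t) →
    ∃ t0 ∈ F, ∃ r < 3, inArc t0 r p ∧ ∀ t' ∈ F, t' ≠ t0 → sub3 t' t0 r := by
  intro m
  induction m using Nat.strong_induction_on with
  | _ m IH =>
  intro F hcard hFam hne p hp hpv
  obtain ⟨t0, ht0⟩ := hne
  obtain ⟨rp, hrp3, hrp⟩ := exists_arc (hFam.1 t0 ht0) hp (hpv t0 ht0)
  by_cases hall : ∀ t' ∈ F, t' ≠ t0 → sub3 t' t0 rp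
  · exact ⟨t0, ht0, rp, hrp3, hrp, hall⟩
  · push_neg at hall
    obtain ⟨t1, ht1F, ht1ne, ht1ns⟩ := hall
    obtain ⟨r1, hr13, hsub1⟩ := hFam.2.2 t0 ht0 t1 ht1F (Ne.symm ht1ne)
    have hr1ne : r1 ≠ rp := fun h => ht1ns (h ▸ hsub1)
    classical
    set F1 := F.filter (fun t => t ≠ t0 ∧ sub3 t t0 r1) with hF1
    have hsubF : F1 ⊆ F := Finset.filter_subset _ _
    have ht1F1 : t1 ∈ F1 := by
      rw [hF1, Finset.mem_filter]; exact ⟨ht1F, ht1ne, hsub1⟩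
    have ht0nF1 : t0 ∉ F1 := by
      rw [hF1, Finset.mem_filter]; rintro ⟨-, h, -⟩; exact h rfl
    have hclt : F1.card < m := by
      rw [← hcard]
      exact Finset.card_lt_card ⟨hsubF, fun hsub => ht0nF1 (hsub ht0)⟩
    obtain ⟨ts, htsF1, r, hr3, hpr, hearF1⟩ :=
      IH F1.card hclt F1 rfl (hFam.mono hsubF) ⟨t1, ht1F1⟩ p hp
        (fun t ht => hpv t (hsubF ht))
    have hts0 := (Finset.mem_filter.mp htsF1).2
    have htsF : ts ∈ F := hsubF htsF1
    have hq1 : ¬ inArc t0 r1 p := by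
      intro h
      exact hr1ne (arc_unique (hFam.1 t0 ht0) h hrp hr13 hrp3)
    refine ⟨ts, htsF, r, hr3, hpr, ?_⟩
    intro t' ht'F ht'ne
    by_cases ht'F1 : t' ∈ F1
    · exact hearF1 t' ht'F1 ht'ne
    · have key : ∀ v, vmem v t' → inArc ts r v := by
        intro v hv
        have hvn : v < n := vlt (hFam.1 t' ht'F) hv
        have hvs : ¬ vmem v ts := hFam.2.1 t' ht'F ts htsF (fun h => ht'ne h) v hv
        have hnv : ¬ inArc t0 r1 v := by
          by_cases ht'0 : t' = t0
          · subst ht'0; exact vmem_not_inArc (hFam.1 t' ht'F) hv r1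
          · obtain ⟨r', hr'3, hsub'⟩ := hFam.2.2 t0 ht0 t' ht'F (fun h => ht'0 h.symm)
            intro hvin
            have : ¬ sub3 t' t0 r1 := by
              intro hs
              exact ht'F1 (by rw [hF1, Finset.mem_filter]; exact ⟨ht'F, ht'0, hs⟩)
            have hr'v : inArc t0 r' v := by
              rcases hv with h | h | h <;> rw [h] <;> [exact hsub'.1; exact hsub'.2.1; exact hsub'.2.2]
            have : r1 = r' := arc_unique (hFam.1 t0 ht0) hvin hr'v hr13 hr'3
            subst this
            exact ‹¬ sub3 t' t0 r1› hsub'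
        exact outside_same_arc (hFam.1 t0 ht0) (hFam.1 ts htsF) hr13 hts0.2 hp hvn
          hq1 hnv (hpv ts htsF) hvs hr3 hpr
      exact ⟨key _ (Or.inl rfl), key _ (Or.inr (Or.inl rfl)), key _ (Or.inr (Or.inr rfl))⟩

lemma ear (n : ℕ) (F : Finset Tri) (hFam : Fam n F) (h2 : 2 ≤ F.card) :
    ∃ t0 ∈ F, ∃ r < 3, ∀ t' ∈ F, t' ≠ t0 → sub3 t' t0 r := by
  classical
  have hne : F.Nonempty := Finset.card_pos.mp (by omega)
  obtain ⟨ta, hta⟩ := hne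
  set F' := F.erase ta with hF'
  have hsubF : F' ⊆ F := Finset.erase_subset _ _
  have hne' : F'.Nonempty := by
    rw [hF', ← Finset.card_pos, Finset.card_erase_of_mem hta]; omega
  have hpa : (ta.1) < n := vlt (hFam.1 ta hta) (Or.inl rfl)
  have hpv : ∀ t ∈ F', ¬ vmem ta.1 t := by
    intro t ht hv
    exact hFam.2.1 t (hsubF ht) ta hta (Finset.ne_of_mem_erase ht) ta.1 hv (Or.inl rfl)
  obtain ⟨ts, htsF', r, hr3, hpr, hearF'⟩ :=
    ear_pt n F'.card F' rfl (hFam.mono hsubF) hne' ta.1 hpa hpv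
  have htsF : ts ∈ F := hsubF htsF'
  have htsne : ts ≠ ta := Finset.ne_of_mem_erase htsF'
  refine ⟨ts, htsF, r, hr3, ?_⟩
  intro t' ht'F ht'ne
  by_cases ht'a : t' = ta
  · subst ht'a
    obtain ⟨r2, hr23, hsub2⟩ := hFam.2.2 ts htsF t' ht'F (fun h => ht'ne h.symm)
    have : r2 = r := arc_unique (hFam.1 ts htsF) hsub2.1 hpr hr23 hr3
    exact this ▸ hsub2
  · exact hearF' t' (Finset.mem_erase.mpr ⟨ht'a, ht'F⟩) ht'ne

def freeP (F : Finset Tri) (t : Tri) (r : ℕ) : Prop :=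
  ∀ t' ∈ F, t' ≠ t → ¬ inArc t r t'.1 ∧ ¬ inArc t r t'.2.1 ∧ ¬ inArc t r t'.2.2

instance (F : Finset Tri) (t : Tri) (r : ℕ) : Decidable (freeP F t r) := by
  unfold freeP; infer_instance

def FG (F : Finset Tri) : Finset (Tri × ℕ) :=
  (F ×ˢ Finset.range 3).filter fun x => freeP F x.1 x.2

lemma mem_FG {F : Finset Tri} {x : Tri × ℕ} :
    x ∈ FG F ↔ x.1 ∈ F ∧ x.2 < 3 ∧ freeP F x.1 x.2 := by
  simp [FG, Finset.mem_filter, Finset.mem_product, and_assoc]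

lemma sub3_of_vertex_inArc {n : ℕ} {F : Finset Tri} (hFam : Fam n F)
    {t t'' : Tri} (ht : t ∈ F) (ht'' : t'' ∈ F) (hne : t'' ≠ t) {r : ℕ} (hr : r < 3)
    {v : ℕ} (hv : vmem v t'') (hvin : inArc t r v) : sub3 t'' t r := by
  obtain ⟨r', hr'3, hsub'⟩ := hFam.2.2 t ht t'' ht'' (fun h => hne h.symm)
  have hvr' : inArc t r' v := by
    rcases hv with h | h | h <;> rw [h] <;> [exact hsub'.1; exact hsub'.2.1; exact hsub'.2.2]
  have : r = r' := arc_unique (hFam.1 t ht) hvin hvr' hr hr'3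
  exact this ▸ hsub'

lemma FG_card (n : ℕ) : ∀ m (F : Finset Tri), F.card = m → Fam n F → F.Nonempty →
    F.card + 2 ≤ (FG F).card := by
  intro m
  induction m using Nat.strong_induction_on with
  | _ m IH =>
  intro F hcard hFam hne
  classical
  rcases eq_or_lt_of_le (Finset.one_le_card.mpr hne) with h1 | h2
  · -- card = 1
    obtain ⟨t, hFt⟩ := Finset.card_eq_one.mp h1.symm
    subst hFt
    have : FG {t} = {t} ×ˢ Finset.range 3 := by
      apply Finset.filter_true_of_mem
      intro x hx t' ht' hne'
      simp only [Finset.mem_singleton] at ht'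
      rw [Finset.mem_product, Finset.mem_singleton] at hx
      exact absurd (ht'.trans hx.1.symm) hne'
    rw [this, Finset.card_product]
    simp
  · -- card ≥ 2
    obtain ⟨t0, ht0, h, hh3, hear⟩ := ear n F hFam h2
    set F' := F.erase t0 with hF'
    have hsubF : F' ⊆ F := Finset.erase_subset _ _
    have hcard' : F'.card = F.card - 1 := Finset.card_erase_of_mem ht0
    have hne' : F'.Nonempty := by rw [← Finset.card_pos]; omega
    have hIH : F'.card + 2 ≤ (FG F').card :=
      IH F'.card (by omega) F' rfl (hFam.mono hsubF) hne'
    set lost := (FG F').filter (fun x => ¬ freeP F x.1 x.2) with hlostdef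
    have hwatch : ∀ x ∈ lost, x.1 ∈ F' ∧ x.2 < 3 ∧ freeP F' x.1 x.2 ∧ sub3 t0 x.1 x.2 := by
      intro x hx
      rw [hlostdef, Finset.mem_filter, mem_FG] at hx
      obtain ⟨⟨hx1, hx2, hx3⟩, hx4⟩ := hx
      refine ⟨hx1, hx2, hx3, ?_⟩
      simp only [freeP, not_forall] at hx4
      obtain ⟨t'', ht''F, ht''ne, hbad⟩ := hx4
      have ht''0 : t'' = t0 := by
        by_contra hcon
        exact hbad (hx3 t'' (Finset.mem_erase.mpr ⟨hcon, ht''F⟩) ht''ne)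
      subst ht''0
      rw [not_and_or, not_and_or] at hbad
      simp only [not_not] at hbad
      have hne0 : t'' ≠ x.1 := ht''ne
      rcases hbad with h | h | h
      · exact sub3_of_vertex_inArc hFam (hsubF hx1) ht0 ht''ne hx2 (Or.inl rfl) h
      · exact sub3_of_vertex_inArc hFam (hsubF hx1) ht0 ht''ne hx2 (Or.inr (Or.inl rfl)) h
      · exact sub3_of_vertex_inArc hFam (hsubF hx1) ht0 ht''ne hx2 (Or.inr (Or.inr rfl)) h
    have hlost1 : lost.card ≤ 1 := by
      rw [Finset.card_le_one]
      intro x hx y hy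
      obtain ⟨hx1, hx2, hx3, hx4⟩ := hwatch x hx
      obtain ⟨hy1, hy2, hy3, hy4⟩ := hwatch y hy
      by_cases hxy : x.1 = y.1
      · have : x.2 = y.2 := by
          apply arc_unique (hFam.1 x.1 (hsubF hx1)) hx4.1 _ hx2 hy2
          rw [hxy]; exact hy4.1
        exact Prod.ext hxy this
      · exfalso
        obtain ⟨r0, hr03, hsub0⟩ := hFam.2.2 x.1 (hsubF hx1) y.1 (hsubF hy1) hxy
        exact not_two_watchers (hFam.1 x.1 (hsubF hx1)) (hFam.1 y.1 (hsubF hy1))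
          (hFam.1 t0 ht0)
          (hFam.2.1 x.1 (hsubF hx1) y.1 (hsubF hy1) hxy)
          hr03 hx2 hy2 hsub0 hx4 hy4
          (hx3 y.1 hy1 (fun hh => hxy hh.symm)) (hy3 x.1 hx1 hxy)
    set B := ({t0} ×ˢ ((Finset.range 3).erase h)) with hB
    have hBcard : B.card = 2 := by
      rw [hB, Finset.card_product, Finset.card_singleton, Finset.card_erase_of_mem (Finset.mem_range.mpr hh3)]
      simp
    have hBsub : B ⊆ FG F := by
      intro x hx
      rw [hB, Finset.mem_product, Finset.mem_singleton, Finset.mem_erase, Finset.mem_range] at hx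
      rw [mem_FG]
      refine ⟨hx.1 ▸ ht0, hx.2.2, ?_⟩
      intro t' ht' hne'
      have hsubh : sub3 t' t0 h := hear t' ht' (by rw [hx.1] at hne'; exact hne')
      rw [hx.1]
      refine ⟨?_, ?_, ?_⟩ <;> intro hin <;>
        [exact hx.2.1 ((arc_unique (hFam.1 t0 ht0) hin hsubh.1 hx.2.2 hh3));
         exact hx.2.1 ((arc_unique (hFam.1 t0 ht0) hin hsubh.2.1 hx.2.2 hh3));
         exact hx.2.1 ((arc_unique (hFam.1 t0 ht0) hin hsubh.2.2 hx.2.2 hh3))]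
    have hkeep : (FG F') \ lost ⊆ FG F := by
      intro x hx
      rw [Finset.mem_sdiff, hlostdef, Finset.mem_filter] at hx
      have hxFG' := hx.1
      rw [mem_FG] at hxFG' ⊢
      refine ⟨hsubF hxFG'.1, hxFG'.2.1, ?_⟩
      by_contra hcon
      exact hx.2 ⟨hx.1, hcon⟩
    have hdisjB : Disjoint ((FG F') \ lost) B := by
      rw [Finset.disjoint_left]
      intro x hx hxB
      rw [Finset.mem_sdiff, mem_FG] at hx
      rw [hB, Finset.mem_product, Finset.mem_singleton] at hxB
      have : x.1 ∈ F' := hx.1.1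
      rw [hxB.1] at this
      exact (Finset.ne_of_mem_erase this) rfl
    have hunion : ((FG F') \ lost) ∪ B ⊆ FG F := Finset.union_subset hkeep hBsub
    have := Finset.card_le_card hunion
    rw [Finset.card_union_of_disjoint hdisjB, hBcard] at this
    have hsd : (FG F').card - 1 ≤ ((FG F') \ lost).card := by
      have := Finset.le_card_sdiff lost (FG F')
      omega
    omega

lemma keybound {n : ℕ} {F : Finset Tri} (hFam : Fam n F) (hne : F.Nonempty) {g : ℝ}
    (hg : 0 ≤ g)
    (hlarge : ∀ t ∈ F, ∀ r < 3, g ≤ ((HOr n t r).card : ℝ)) :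
    ((F.card : ℝ) + 2) * g ≤ n := by
  classical
  have hdisj : ∀ x ∈ FG F, ∀ y ∈ FG F, x ≠ y →
      Disjoint (HOr n x.1 x.2) (HOr n y.1 y.2) := by
    intro x hx y hy hxy
    rw [mem_FG] at hx hy
    by_cases h1 : x.1 = y.1
    · have h2 : x.2 ≠ y.2 := fun hc => hxy (Prod.ext h1 hc)
      rw [← h1]
      exact HOr_disj_same (hFam.1 x.1 hx.1) h2 hx.2.1 hy.2.1
    · obtain ⟨rA, hrA3, hsubA⟩ := hFam.2.2 x.1 hx.1 y.1 hy.1 h1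
      have hfr := hx.2.2 y.1 hy.1 (fun hh => h1 hh.symm)
      have hrAne : rA ≠ x.2 := by
        intro hc
        exact (hc ▸ hfr.1) hsubA.1
      exact HOr_disj (hFam.1 x.1 hx.1) (hFam.1 y.1 hy.1) hx.2.1 hy.2.1 hrA3 hrAne hsubA
        (hy.2.2 x.1 hx.1 h1)
        (hFam.2.1 x.1 hx.1 y.1 hy.1 h1)
  have hsum : ∑ x ∈ FG F, (HOr n x.1 x.2).card ≤ n := by
    rw [← Finset.card_biUnion hdisj]
    calc ((FG F).biUnion fun x => HOr n x.1 x.2).card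
        ≤ (Finset.range n).card := Finset.card_le_card (by
          intro q hq
          rw [Finset.mem_biUnion] at hq
          obtain ⟨x, hx, hqx⟩ := hq
          rw [mem_FG] at hx
          exact HOr_subset (hFam.1 x.1 hx.1) x.2 hqx)
      _ = n := Finset.card_range n
  have hcount : F.card + 2 ≤ (FG F).card := FG_card n F.card F rfl hFam hne
  calc ((F.card : ℝ) + 2) * g ≤ ((FG F).card : ℝ) * g := by
        apply mul_le_mul_of_nonneg_right _ hg
        push_cast
        exact_mod_cast (by exact_mod_cast hcount : ((F.card + 2 : ℕ) : ℝ) ≤ ((FG F).card : ℝ))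
    _ = ∑ _x ∈ FG F, g := by rw [Finset.sum_const, nsmul_eq_mul]
    _ ≤ ∑ x ∈ FG F, ((HOr n x.1 x.2).card : ℝ) := by
        apply Finset.sum_le_sum
        intro x hx
        rw [mem_FG] at hx
        exact hlarge x.1 hx.1 x.2 hx.2.1
    _ ≤ n := by
        rw [← Nat.cast_sum]
        exact_mod_cast hsum

def tripleOf (s : Finset ℕ) : Tri :=
  ((s.sort (·≤·)).getD 0 0, (s.sort (·≤·)).getD 1 0, (s.sort (·≤·)).getD 2 0)

lemma tripleOf_spec {s : Finset ℕ} (h : s.card = 3) :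
    (tripleOf s).1 < (tripleOf s).2.1 ∧ (tripleOf s).2.1 < (tripleOf s).2.2 ∧
      ∀ v, v ∈ s ↔ vmem v (tripleOf s) := by
  have hlen : (s.sort (·≤·)).length = 3 := by rw [Finset.length_sort]; exact h
  have hsorted : (s.sort (·≤·)).Pairwise (·≤·) := Finset.pairwise_sort _ _
  have hnodup : (s.sort (·≤·)).Nodup := Finset.sort_nodup _ _
  have hmem : ∀ v, v ∈ s.sort (·≤·) ↔ v ∈ s := fun v => Finset.mem_sort _
  rcases hl : s.sort (·≤·) with _ | ⟨a, _ | ⟨b, _ | ⟨c, rest⟩⟩⟩ <;>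
    rw [hl] at hlen <;> simp at hlen
  subst hlen
  rw [hl] at hsorted hnodup hmem
  simp only [List.pairwise_cons, List.mem_cons, List.not_mem_nil, or_false,
    List.mem_singleton] at hsorted
  have hab : a ≤ b := hsorted.1 b (Or.inl rfl)
  have hbc : b ≤ c := hsorted.2.1 c rfl
  have hne1 : a ≠ b := by intro hh; subst hh; simp at hnodup
  have hne2 : b ≠ c := by intro hh; subst hh; simp at hnodup
  have ht : tripleOf s = (a, b, c) := by simp [tripleOf, hl]
  rw [ht]
  refine ⟨show a < b by omega, show b < c by omega, ?_⟩
  intro v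
  rw [← hmem v]
  simp [vmem]

def trip {n : ℕ} (p : Finset (Fin n)) : Tri := tripleOf (p.image Fin.val)

lemma trip_spec {n : ℕ} {p : Finset (Fin n)} (h : p.card = 3) :
    okT n (trip p) ∧ ∀ v : ℕ, (∃ i ∈ p, (i : ℕ) = v) ↔ vmem v (trip p) := by
  have hcard : (p.image Fin.val).card = 3 := by
    rw [Finset.card_image_of_injective _ Fin.val_injective]; exact h
  obtain ⟨h1, h2, h3⟩ := tripleOf_spec hcard
  have hmem : ∀ v, (∃ i ∈ p, (i : ℕ) = v) ↔ vmem v (trip p) := by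
    intro v
    unfold trip
    rw [← h3 v]
    simp [Finset.mem_image]
  have hcn : (trip p).2.2 < n := by
    have : vmem (trip p).2.2 (trip p) := Or.inr (Or.inr rfl)
    obtain ⟨i, _, hi⟩ := (hmem _).mpr this
    rw [← hi]; exact i.isLt
  exact ⟨⟨h1, h2, hcn⟩, hmem⟩

lemma trip_inj {n : ℕ} {p q : Finset (Fin n)} (hp : p.card = 3) (hq : q.card = 3)
    (h : trip p = trip q) : p = q := by
  obtain ⟨-, hmp⟩ := trip_spec hp
  obtain ⟨-, hmq⟩ := trip_spec hq
  ext i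
  constructor <;> intro hi
  · obtain ⟨j, hj, hj2⟩ := (hmq (i : ℕ)).mpr (h ▸ (hmp (i : ℕ)).mp ⟨i, hi, rfl⟩)
    rwa [← Fin.val_injective hj2]
  · obtain ⟨j, hj, hj2⟩ := (hmp (i : ℕ)).mpr (h.symm ▸ (hmq (i : ℕ)).mp ⟨i, hi, rfl⟩)
    rwa [← Fin.val_injective hj2]

def mind (n : ℕ) (t : Tri) : ℕ :=
  min (min (t.2.1 - t.1) (n - (t.2.1 - t.1)))
    (min (min (t.2.2 - t.2.1) (n - (t.2.2 - t.2.1)))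
      (min (t.2.2 - t.1) (n - (t.2.2 - t.1))))

lemma mind_le_HOr {n : ℕ} {t : Tri} (h : okT n t) {r : ℕ} (hr : r < 3) :
    mind n t ≤ (HOr n t r).card := by
  obtain ⟨a, b, c⟩ := t
  obtain ⟨c0, c1, c2⟩ := HOr_card h
  dsimp only at c0 c1 c2
  simp only [okT] at h
  interval_cases r
  · rw [c0]; simp only [mind]; omega
  · rw [c1]; simp only [mind]; omega
  · rw [c2]; simp only [mind]; omega

lemma decomp_card {n : ℕ} {P : Finset (Finset (Fin n))} (h : IsTriDecomp n P) :
    P.card * 3 = n.choose 2 := by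
  classical
  have hcover : (Finset.univ : Finset (Fin n)).powersetCard 2
      = P.biUnion (fun p => p.powersetCard 2) := by
    ext e
    simp only [Finset.mem_powersetCard, Finset.mem_biUnion]
    constructor
    · rintro ⟨hsub, hc2⟩
      obtain ⟨i, j, hij, rfl⟩ := Finset.card_eq_two.mp hc2
      obtain ⟨p, ⟨hp, hip, hjp⟩, -⟩ := h.2 i j hij
      exact ⟨p, hp, Finset.insert_subset hip (Finset.singleton_subset_iff.mpr hjp), hc2⟩
    · rintro ⟨p, hp, hsub, hc2⟩
      exact ⟨Finset.subset_univ _, hc2⟩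
  have hdisj : ∀ p ∈ P, ∀ q ∈ P, p ≠ q → Disjoint (p.powersetCard 2) (q.powersetCard 2) := by
    intro p hp q hq hne
    rw [Finset.disjoint_left]
    intro e hep heq
    rw [Finset.mem_powersetCard] at hep heq
    obtain ⟨i, j, hij, rfl⟩ := Finset.card_eq_two.mp hep.2
    obtain ⟨u, -, huniq⟩ := h.2 i j hij
    exact hne ((huniq p ⟨hp, hep.1 (by simp), hep.1 (by simp)⟩).trans
      (huniq q ⟨hq, heq.1 (by simp), heq.1 (by simp)⟩).symm)
  have hcc := congrArg Finset.card hcover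
  rw [Finset.card_biUnion hdisj, Finset.card_powersetCard, Finset.card_univ,
    Fintype.card_fin] at hcc
  have hsum : ∑ p ∈ P, (p.powersetCard 2).card = ∑ _p ∈ P, 3 := by
    apply Finset.sum_congr rfl
    intro p hp
    rw [Finset.card_powersetCard, h.1 p hp]
    rfl
  rw [hsum, Finset.sum_const, smul_eq_mul] at hcc
  omega

lemma pair_enc {n u v D : ℕ} (hu : u < v) (hv : v < n) (hD : min (v-u) (n-(v-u)) < D) :
    ∃ w d : ℕ, w < n ∧ 1 ≤ d ∧ d < D ∧ d < n ∧
      ((w = u ∧ (w+d)%n = v) ∨ (w = v ∧ (w+d)%n = u)) := by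
  by_cases hc : v - u ≤ n - (v - u)
  · refine ⟨u, v - u, by omega, by omega, by omega, by omega, Or.inl ⟨rfl, ?_⟩⟩
    rw [show u + (v - u) = v by omega]
    exact Nat.mod_eq_of_lt hv
  · refine ⟨v, n - (v - u), by omega, by omega, by omega, by omega, Or.inr ⟨rfl, ?_⟩⟩
    rw [show v + (n - (v - u)) = n + u by omega, Nat.add_mod_left]
    exact Nat.mod_eq_of_lt (by omega)

lemma addmod_ne {n w d : ℕ} (hw : w < n) (hd : d < n) (h1 : 1 ≤ d) : (w+d) % n ≠ w := by
  rcases lt_or_ge (w+d) n with h | h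
  · rw [Nat.mod_eq_of_lt h]; omega
  · rw [Nat.mod_eq_sub_mod h, Nat.mod_eq_of_lt (by omega)]; omega

lemma short_count {n : ℕ} {P : Finset (Finset (Fin n))} (h : IsTriDecomp n P) (D : ℕ)
    (S : Finset (Finset (Fin n))) (hS : S ⊆ P)
    (hshort : ∀ p ∈ S, mind n (trip p) < D) :
    S.card ≤ n * (D - 1) := by
  classical
  have key : ∀ p ∈ S, ∃ w d : ℕ, w < n ∧ 1 ≤ d ∧ d < D ∧ d < n ∧
      (∃ i ∈ p, (i:ℕ) = w) ∧ (∃ i ∈ p, (i:ℕ) = (w + d) % n) := by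
    intro p hp
    obtain ⟨hok, hmem⟩ := trip_spec (h.1 p (hS hp))
    obtain ⟨hab, hbc, hcn⟩ := hok
    have hm := hshort p hp
    simp only [mind] at hm
    have hma : ∃ i ∈ p, (i:ℕ) = (trip p).1 := (hmem _).mpr (Or.inl rfl)
    have hmb : ∃ i ∈ p, (i:ℕ) = (trip p).2.1 := (hmem _).mpr (Or.inr (Or.inl rfl))
    have hmc : ∃ i ∈ p, (i:ℕ) = (trip p).2.2 := (hmem _).mpr (Or.inr (Or.inr rfl))
    have hcase : min ((trip p).2.1 - (trip p).1) (n - ((trip p).2.1 - (trip p).1)) < D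
        ∨ min ((trip p).2.2 - (trip p).2.1) (n - ((trip p).2.2 - (trip p).2.1)) < D
        ∨ min ((trip p).2.2 - (trip p).1) (n - ((trip p).2.2 - (trip p).1)) < D := by omega
    rcases hcase with hc | hc | hc
    · obtain ⟨w, d, h1, h2, h3, h4, h5⟩ := pair_enc hab (by omega) hc
      refine ⟨w, d, h1, h2, h3, h4, ?_, ?_⟩ <;> rcases h5 with ⟨rfl, he⟩ | ⟨rfl, he⟩ <;>
        simp [he, hma, hmb]
    · obtain ⟨w, d, h1, h2, h3, h4, h5⟩ := pair_enc hbc (by omega) hc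
      refine ⟨w, d, h1, h2, h3, h4, ?_, ?_⟩ <;> rcases h5 with ⟨rfl, he⟩ | ⟨rfl, he⟩ <;>
        simp [he, hmb, hmc]
    · obtain ⟨w, d, h1, h2, h3, h4, h5⟩ := pair_enc (by omega : (trip p).1 < (trip p).2.2) (by omega) hc
      refine ⟨w, d, h1, h2, h3, h4, ?_, ?_⟩ <;> rcases h5 with ⟨rfl, he⟩ | ⟨rfl, he⟩ <;>
        simp [he, hma, hmc]
  set φ : Finset (Fin n) → ℕ × ℕ := fun p =>
    if hp : p ∈ S then ⟨(key p hp).choose, (key p hp).choose_spec.choose⟩ else (0, 0) with hφ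
  have spec : ∀ p ∈ S, ∃ w d : ℕ, φ p = (w, d) ∧ w < n ∧ 1 ≤ d ∧ d < D ∧ d < n ∧
      (∃ i ∈ p, (i:ℕ) = w) ∧ (∃ i ∈ p, (i:ℕ) = (w + d) % n) := by
    intro p hp
    obtain ⟨h1, h2, h3, h4, h5, h6⟩ := (key p hp).choose_spec.choose_spec
    exact ⟨_, _, by simp only [hφ, dif_pos hp], h1, h2, h3, h4, h5, h6⟩
  have hmaps : ∀ p ∈ S, φ p ∈ (Finset.range n) ×ˢ (Finset.Ico 1 D) := by
    intro p hp
    obtain ⟨w, d, hφ1, h1, h2, h3, -⟩ := spec p hp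
    rw [hφ1]
    simp only [Finset.mem_product, Finset.mem_range, Finset.mem_Ico]
    exact ⟨h1, h2, h3⟩
  have hinj : ∀ p ∈ S, ∀ q ∈ S, φ p = φ q → p = q := by
    intro p hp q hq heq
    obtain ⟨w1, d1, hφ1, hw1, hd1, -, hdn1, ⟨i1, hi1, hvi1⟩, ⟨j1, hj1, hvj1⟩⟩ := spec p hp
    obtain ⟨w2, d2, hφ2, hw2, hd2, -, hdn2, ⟨i2, hi2, hvi2⟩, ⟨j2, hj2, hvj2⟩⟩ := spec q hq
    rw [hφ1, hφ2, Prod.mk.injEq] at heq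
    obtain ⟨hww, hdd⟩ := heq
    subst hww; subst hdd
    have hii : i1 = i2 := Fin.val_injective (by rw [hvi1, hvi2])
    have hjj : j1 = j2 := Fin.val_injective (by rw [hvj1, hvj2])
    have hij : i1 ≠ j1 := by
      intro hc
      apply addmod_ne hw1 hdn1 hd1
      rw [← hvj1, ← hvi1, hc]
    obtain ⟨u, -, huniq⟩ := h.2 i1 j1 hij
    rw [huniq p ⟨hS hp, hi1, hj1⟩, huniq q ⟨hS hq, hii ▸ hi2, hjj ▸ hj2⟩]
  calc S.card ≤ ((Finset.range n) ×ˢ (Finset.Ico 1 D)).card :=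
        Finset.card_le_card_of_injOn φ hmaps (fun p hp q hq => hinj p hp q hq)
    _ = n * (D - 1) := by rw [Finset.card_product, Finset.card_range, Nat.card_Ico]

lemma class_bound {n : ℕ} {P : Finset (Finset (Fin n))} (hdec : IsTriDecomp n P)
    {f : Finset (Fin n) → ℕ}
    (hcol : ∀ p ∈ P, ∀ q ∈ P, p ≠ q → ConvIntersects p q → f p ≠ f q)
    (C : Finset (Finset (Fin n))) (hCP : C ⊆ P) (hsame : ∀ p ∈ C, ∀ q ∈ C, f p = f q)
    {x : ℝ} (hx : 3 ≤ x)
    (hlarge : ∀ p ∈ C, (n:ℝ)/x ≤ (mind n (trip p) : ℝ)) :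
    (C.card : ℝ) ≤ x - 2 := by
  classical
  rcases C.eq_empty_or_nonempty with rfl | hne
  · simp; linarith
  set F := C.image trip with hF
  have hinj : Set.InjOn trip C := fun p hp q hq hpq =>
    trip_inj (hdec.1 p (hCP hp)) (hdec.1 q (hCP hq)) hpq
  have hFcard : F.card = C.card := Finset.card_image_of_injOn hinj
  obtain ⟨p0, hp0⟩ := hne
  have hn0 : 0 < n :=
    lt_of_le_of_lt (Nat.zero_le _) (trip_spec (hdec.1 p0 (hCP hp0))).1.2.2
  have hNI : ∀ p ∈ C, ∀ q ∈ C, p ≠ q → ¬ ConvIntersects p q := by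
    intro p hp q hq hne' hCI
    exact hcol p (hCP hp) q (hCP hq) hne' hCI (hsame p hp q hq)
  have hvd : ∀ p ∈ C, ∀ q ∈ C, p ≠ q → ∀ v, vmem v (trip p) → ¬ vmem v (trip q) := by
    intro p hp q hq hne' v hv hv'
    obtain ⟨i, hi, hvi⟩ := ((trip_spec (hdec.1 p (hCP hp))).2 v).mpr hv
    obtain ⟨j, hj, hvj⟩ := ((trip_spec (hdec.1 q (hCP hq))).2 v).mpr hv'
    have : i = j := Fin.val_injective (by rw [hvi, hvj])
    exact hNI p hp q hq hne' (Or.inl ⟨i, Finset.mem_inter.mpr ⟨hi, this ▸ hj⟩⟩)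
  have hFam : Fam n F := by
    refine ⟨?_, ?_, ?_⟩
    · intro t ht
      obtain ⟨p, hp, rfl⟩ := Finset.mem_image.mp ht
      exact (trip_spec (hdec.1 p (hCP hp))).1
    · intro t ht t' ht' htne v hv hv'
      obtain ⟨p, hp, rfl⟩ := Finset.mem_image.mp ht
      obtain ⟨q, hq, rfl⟩ := Finset.mem_image.mp ht'
      exact hvd p hp q hq (fun hc => htne (hc ▸ rfl)) v hv hv'
    · intro t ht t' ht' htne
      obtain ⟨p, hp, rfl⟩ := Finset.mem_image.mp ht
      obtain ⟨q, hq, rfl⟩ := Finset.mem_image.mp ht'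
      have hpq : p ≠ q := fun hc => htne (hc ▸ rfl)
      have hCI := hNI p hp q hq hpq
      rw [ConvIntersects, not_or] at hCI
      push_neg at hCI
      apply sep_of_noncross (n := n) (trip_spec (hdec.1 p (hCP hp))).1
        (trip_spec (hdec.1 q (hCP hq))).1 (hvd p hp q hq hpq)
      intro u v a b hu hv ha hb huv hab
      obtain ⟨i, hi, rfl⟩ := ((trip_spec (hdec.1 p (hCP hp))).2 u).mpr hu
      obtain ⟨j, hj, rfl⟩ := ((trip_spec (hdec.1 p (hCP hp))).2 v).mpr hv
      obtain ⟨k, hk, rfl⟩ := ((trip_spec (hdec.1 q (hCP hq))).2 a).mpr ha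
      obtain ⟨l, hl, rfl⟩ := ((trip_spec (hdec.1 q (hCP hq))).2 b).mpr hb
      exact hCI.2 i hi j hj k hk l hl (fun hc => huv (hc ▸ rfl)) (fun hc => hab (hc ▸ rfl))
  have hFne : F.Nonempty := ⟨trip p0, Finset.mem_image_of_mem _ hp0⟩
  have hxpos : (0:ℝ) < x := by linarith
  have hkb := keybound hFam hFne
    (g := (n:ℝ)/x) (div_nonneg (Nat.cast_nonneg n) (le_of_lt hxpos)) ?_
  · have hgpos : (0:ℝ) < (n:ℝ)/x := div_pos (by exact_mod_cast hn0) hxpos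
    have hnx : (n:ℝ) = x * ((n:ℝ)/x) := by field_simp
    have h3 : ((F.card:ℝ)+2) ≤ x :=
      le_of_mul_le_mul_right (by linarith [hkb, hnx]) hgpos
    rw [hFcard] at h3
    linarith
  · intro t ht r hr
    obtain ⟨p, hp, rfl⟩ := Finset.mem_image.mp ht
    calc (n:ℝ)/x ≤ (mind n (trip p) : ℝ) := hlarge p hp
      _ ≤ ((HOr n (trip p) r).card : ℝ) := by
          exact_mod_cast mind_le_HOr (trip_spec (hdec.1 p (hCP hp))).1 hr

end S12

/-- Every decomposition of `K^c_n` into triangles has chromatic index at least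
`(C(n,2)/3 - n²/x)/(x-2)` for every `x ≥ 3`; with `x = 2(3+√6)` this gives
`n²/(60+24√6) - O(n) > n²/119 - O(n)` colors in any proper coloring. -/
theorem stmt12 :
    ∃ C : ℝ, ∀ (n : ℕ) (P : Finset (Finset (Fin n))), IsTriDecomp n P →
      ∀ f : Finset (Fin n) → ℕ,
        (∀ p ∈ P, ∀ q ∈ P, p ≠ q → ConvIntersects p q → f p ≠ f q) →
        (∀ x : ℝ, 3 ≤ x →
            ((n.choose 2 : ℝ) / 3 - (n : ℝ) ^ 2 / x) / (x - 2) ≤ ((P.image f).card : ℝ)) ∧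
        (n : ℝ) ^ 2 / (60 + 24 * Real.sqrt 6) - C * n ≤ ((P.image f).card : ℝ) ∧
        (n : ℝ) ^ 2 / 119 - C * n ≤ ((P.image f).card : ℝ) := by
  use 1
  intro n P hdec f hcol
  classical
  have main : ∀ x : ℝ, 3 ≤ x →
      ((n.choose 2 : ℝ) / 3 - (n : ℝ) ^ 2 / x) / (x - 2) ≤ ((P.image f).card : ℝ) := by
    intro x hx
    have hx0 : (0:ℝ) < x := by linarith
    set D := ⌈(n:ℝ)/x⌉₊ with hD
    set L := P.filter (fun p => D ≤ S12.mind n (S12.trip p)) with hL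
    have hLP : L ⊆ P := Finset.filter_subset _ _
    set Sh := P.filter (fun p => ¬ D ≤ S12.mind n (S12.trip p)) with hSh
    have hLS : L.card + Sh.card = P.card := Finset.card_filter_add_card_filter_not _
    have hShc : Sh.card ≤ n * (D - 1) := by
      apply S12.short_count hdec D Sh (Finset.filter_subset _ _)
      intro p hp
      rw [hSh, Finset.mem_filter] at hp
      omega
    have hfiber : ∀ c, ((L.filter (fun p => f p = c)).card : ℝ) ≤ x - 2 := by
      intro c
      apply S12.class_bound hdec hcol _ ((Finset.filter_subset _ _).trans hLP) ?_ hx ?_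
      · intro p hp q hq
        rw [Finset.mem_filter] at hp hq
        rw [hp.2, hq.2]
      · intro p hp
        rw [Finset.mem_filter] at hp
        have hp2 := hp.1
        rw [hL, Finset.mem_filter] at hp2
        calc (n:ℝ)/x ≤ (D:ℝ) := Nat.le_ceil _
          _ ≤ _ := by exact_mod_cast hp2.2
    have hcard : L.card = ∑ c ∈ P.image f, (L.filter (fun p => f p = c)).card :=
      Finset.card_eq_sum_card_fiberwise (fun p hp => Finset.mem_image_of_mem f (hLP hp))
    have h1 : ((L.card : ℝ)) ≤ ((P.image f).card : ℝ) * (x - 2) := by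
      rw [hcard]
      push_cast
      calc ∑ c ∈ P.image f, ((L.filter (fun p => f p = c)).card : ℝ)
          ≤ ∑ _c ∈ P.image f, (x - 2) := Finset.sum_le_sum (fun c _ => hfiber c)
        _ = ((P.image f).card : ℝ) * (x - 2) := by rw [Finset.sum_const, nsmul_eq_mul]
    have hPc : (P.card : ℝ) * 3 = (n.choose 2 : ℝ) := by
      exact_mod_cast congrArg (Nat.cast : ℕ → ℝ) (S12.decomp_card hdec)
    have hShR : (Sh.card : ℝ) ≤ (n:ℝ)^2/x := by
      have hc1 : (Sh.card : ℝ) ≤ (n:ℝ) * (((D - 1 : ℕ)) : ℝ) := by exact_mod_cast hShc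
      have hc2 : (((D - 1 : ℕ)) : ℝ) ≤ (n:ℝ)/x := by
        rcases Nat.eq_zero_or_pos D with h0 | h0
        · rw [h0]; simp; positivity
        · have hcl := Nat.ceil_lt_add_one (div_nonneg (Nat.cast_nonneg n) (le_of_lt hx0))
          rw [Nat.cast_sub (by omega)]
          push_cast
          rw [← hD] at hcl
          linarith
      calc (Sh.card:ℝ) ≤ (n:ℝ) * (((D-1:ℕ)):ℝ) := hc1
        _ ≤ (n:ℝ) * ((n:ℝ)/x) := mul_le_mul_of_nonneg_left hc2 (Nat.cast_nonneg n)
        _ = (n:ℝ)^2/x := by ring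
    have hLlow : (n.choose 2:ℝ)/3 - (n:ℝ)^2/x ≤ (L.card:ℝ) := by
      have hLSr : (L.card:ℝ) + (Sh.card:ℝ) = (P.card:ℝ) := by exact_mod_cast hLS
      linarith
    rw [div_le_iff₀ (by linarith : (0:ℝ) < x - 2)]
    linarith
  set s6 := Real.sqrt 6 with hs
  have hs6 : s6^2 = 6 := Real.sq_sqrt (by norm_num)
  have hsnn : (0:ℝ) ≤ s6 := Real.sqrt_nonneg 6
  have hs2 : (2:ℝ) ≤ s6 := by nlinarith
  have hb := main (6 + 2*s6) (by linarith)
  have hD2 : (0:ℝ) < 6 + 2*s6 - 2 := by linarith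
  have hchoose : (n.choose 2 : ℝ) = (n:ℝ) * ((n:ℝ) - 1) / 2 := by
    exact_mod_cast Nat.cast_choose_two (K := ℝ) n
  rw [hchoose] at hb
  have hapos : (0:ℝ) < 60 + 24*s6 := by linarith
  have hbpos : (0:ℝ) < 6 + 2*s6 := by linarith
  have key1 : ((n:ℝ)*((n:ℝ)-1)/2/3 - (n:ℝ)^2/(6+2*s6))/(6+2*s6-2)
      = (n:ℝ)^2/(60+24*s6) - (n:ℝ)/(6*(6+2*s6-2)) := by
    rw [div_eq_iff (ne_of_gt hD2)]
    field_simp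
    ring_nf
    linear_combination (144 * (n:ℝ)^2) * hs6
  rw [key1] at hb
  have hsmall : (n:ℝ)/(6*(6+2*s6-2)) ≤ 1 * (n:ℝ) := by
    rw [one_mul]
    apply div_le_self (Nat.cast_nonneg n)
    linarith
  have part2 : (n : ℝ) ^ 2 / (60 + 24 * s6) - 1 * n ≤ ((P.image f).card : ℝ) := by
    linarith
  refine ⟨main, part2, ?_⟩
  have hs59 : s6 ≤ 59/24 := by nlinarith
  have h119 : (n:ℝ)^2/119 ≤ (n:ℝ)^2/(60+24*s6) := by
    apply div_le_div_of_nonneg_left (sq_nonneg _) hapos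
    linarith
  linarith
end

section
/- Let (d₁, d₂, d₃) be a difference triple modulo n, i.e., 1 ≤ d₁ < d₂ < d₃ ≤ n/2 and either d₁ + d₂ + d₃ ≡ 0 (mod n) or d₁ + d₂ ≡ d₃ (mod n). Then the triples {x, x+d₁, x+d₁+d₂} for x ∈ ℤ/nℤ form a family of n triples such that every edge of K_n whose length lies in {d₁, d₂, d₃} is covered exactly once, provided n is odd and 3∤n. -/
open Finset

set_option linter.unreachableTactic false
set_option linter.unusedTactic false

lemma notdvd {n k : ℕ} (h0 : k ≠ 0) (h1 : k ≠ n) (h2 : k < 2*n) : ¬ n ∣ k := by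
  rintro ⟨c, rfl⟩
  rcases Nat.lt_or_ge c 2 with h | h
  · interval_cases c <;> omega
  · have := Nat.mul_le_mul_left n h
    omega

lemma castne' (n : ℕ) [NeZero n] {k : ℕ} (h0 : k ≠ 0) (h1 : k ≠ n) (h2 : k < 2*n) :
    (k : ZMod n) ≠ 0 := by
  rw [Ne, ZMod.natCast_eq_zero_iff]
  exact notdvd h0 h1 h2

lemma castinj (n : ℕ) [NeZero n] {k l : ℕ} (hk : k < n) (hl : l < n)
    (h : (k : ZMod n) = (l : ZMod n)) : k = l := by
  have h2 := ZMod.val_cast_of_lt hk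
  rw [h, ZMod.val_cast_of_lt hl] at h2
  omega

lemma castsub (n : ℕ) {k : ℕ} (h : k ≤ n) : ((n - k : ℕ) : ZMod n) = -(k : ZMod n) := by
  rw [Nat.cast_sub h, ZMod.natCast_self, zero_sub]


/-- The length of the edge `{a,b}` of `K_n` with vertex set `ℤ/nℤ`. -/
def pairlen (n : ℕ) (a b : ZMod n) : ℕ := min (a - b).val (b - a).val

set_option maxHeartbeats 2000000 in
/-- If `(d₁,d₂,d₃)` is a difference triple mod `n` (with `n` odd, `3 ∤ n`), then
the `n` translates `{x, x+d₁, x+d₁+d₂}`, `x ∈ ℤ/nℤ`, form a family of `n`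
triples covering each edge of `K_n` of length in `{d₁,d₂,d₃}` exactly once. -/
theorem stmt15 (n : ℕ) (hn : Odd n) (h3 : ¬ (3 ∣ n))
    (d1 d2 d3 : ℕ) (h1 : 1 ≤ d1) (h12 : d1 < d2) (h23 : d2 < d3) (h3n : 2 * d3 ≤ n)
    (hsum : (d1 + d2 + d3) % n = 0 ∨ (d1 + d2) % n = d3 % n) :
    let T : ZMod n → Finset (ZMod n) :=
      fun x => {x, x + (d1 : ZMod n), x + ((d1 + d2 : ℕ) : ZMod n)}
    (((Finset.range n).image (fun x : ℕ => T (x : ZMod n))).card = n) ∧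
    ∀ a b : ZMod n, a ≠ b → pairlen n a b ∈ ({d1, d2, d3} : Set ℕ) →
      ∃! x : ZMod n, a ∈ T x ∧ b ∈ T x := by
  intro T
  have hodd : n % 2 = 1 := Nat.odd_iff.mp hn
  haveI : NeZero n := ⟨by omega⟩
  have hDor : d1 + d2 = d3 ∨ d1 + d2 + d3 = n := by
    rcases hsum with h | h
    · right
      obtain ⟨k, hk⟩ := Nat.dvd_of_mod_eq_zero h
      rcases Nat.lt_or_ge k 2 with hk2 | hk2
      · interval_cases k <;> omega
      · exfalso
        have h2 := Nat.mul_le_mul_left n hk2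
        omega
    · left
      rw [Nat.mod_eq_of_lt (by omega), Nat.mod_eq_of_lt (by omega)] at h
      omega
  -- nonzero facts
  have z1 : (d1 : ZMod n) ≠ 0 := castne' n (by omega) (by omega) (by omega)
  have z2 : (d2 : ZMod n) ≠ 0 := castne' n (by omega) (by omega) (by omega)
  have z3 : (d1 : ZMod n) + (d2 : ZMod n) ≠ 0 := by
    have h := castne' n (k := d1 + d2) (by omega) (by omega) (by omega)
    push_cast at h; exact h
  have z4 : (d1 : ZMod n) - (d2 : ZMod n) ≠ 0 := by
    have h := castne' n (k := d2 - d1) (by omega) (by omega) (by omega)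
    rw [Nat.cast_sub (by omega)] at h
    intro hc; exact h (by linear_combination -hc)
  have z5 : 2*(d1 : ZMod n) ≠ 0 := by
    have h := castne' n (k := 2*d1) (by omega) (by omega) (by omega)
    push_cast at h; exact h
  have z6 : 2*(d2 : ZMod n) ≠ 0 := by
    have h := castne' n (k := 2*d2) (by omega) (by omega) (by omega)
    push_cast at h; exact h
  have z7 : 2*(d1 : ZMod n) + 2*(d2 : ZMod n) ≠ 0 := by
    have h := castne' n (k := 2*(d1+d2)) (by omega) (by omega) (by omega)
    push_cast at h; intro hc; exact h (by linear_combination hc)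
  have z8 : 2*(d1 : ZMod n) + (d2 : ZMod n) ≠ 0 := by
    have h := castne' n (k := 2*d1+d2) (by omega) (by omega) (by omega)
    push_cast at h; exact h
  have z9 : (d1 : ZMod n) + 2*(d2 : ZMod n) ≠ 0 := by
    have h := castne' n (k := d1+2*d2) (by omega) (by omega) (by omega)
    push_cast at h; exact h
  constructor
  · -- cardinality
    have hsum3 : ∀ z : ZMod n, ∑ t ∈ T z, t = 3*z + (2*(d1:ZMod n) + (d2:ZMod n)) := by
      intro z
      have e1 : z ∉ ({z + (d1:ZMod n), z + ((d1+d2:ℕ):ZMod n)} : Finset (ZMod n)) := by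
        simp only [mem_insert, mem_singleton]
        rintro (h | h)
        · exact z1 (by linear_combination -h)
        · push_cast at h; exact z3 (by linear_combination -h)
      have e2 : (z + (d1:ZMod n)) ∉ ({z + ((d1+d2:ℕ):ZMod n)} : Finset (ZMod n)) := by
        simp only [mem_singleton]
        intro h; push_cast at h; exact z2 (by linear_combination -h)
      show ∑ t ∈ ({z, z + (d1:ZMod n), z + ((d1+d2:ℕ):ZMod n)} : Finset (ZMod n)), t = _
      rw [Finset.sum_insert e1, Finset.sum_insert e2, Finset.sum_singleton]
      push_cast; ring
    have hinj : Set.InjOn (fun x : ℕ => T (x:ZMod n)) (Finset.range n) := by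
      intro x hx y hy hTxy
      simp only [Finset.coe_range, Set.mem_Iio] at hx hy
      have e1 := hsum3 (x:ZMod n)
      have e2 := hsum3 (y:ZMod n)
      rw [show T (x:ZMod n) = T (y:ZMod n) from hTxy] at e1
      have h3x : (3:ZMod n) * ((x:ZMod n) - (y:ZMod n)) = 0 := by linear_combination e2 - e1
      have hu : IsUnit (3 : ZMod n) := by
        have := ZMod.isUnit_prime_of_not_dvd (n := n) Nat.prime_three h3
        simpa using this
      have h0 := (hu.mul_right_eq_zero).mp h3x
      exact castinj n hx hy (by linear_combination h0)
    rw [Finset.card_image_of_injOn hinj, Finset.card_range]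
  · -- covering
    intro a b hab hp
    have hv0 : b - a ≠ 0 := sub_ne_zero.mpr (Ne.symm hab)
    have hvpos : 0 < (b - a).val := Nat.pos_of_ne_zero (fun h => hv0 ((ZMod.val_eq_zero _).mp h))
    have hvlt : (b - a).val < n := ZMod.val_lt _
    have hw : (a - b).val = n - (b - a).val := by
      have hh : a - b = -(b - a) := by ring
      rw [hh, ZMod.neg_val, if_neg hv0]
    simp only [pairlen, Set.mem_insert_iff, Set.mem_singleton_iff] at hp
    rw [hw] at hp
    have hcast : b - a = (((b - a).val : ℕ) : ZMod n) := (ZMod.natCast_rightInverse (b-a)).symm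
    have hv6 : (b-a).val = d1 ∨ (b-a).val = d2 ∨ (b-a).val = d1 + d2 ∨
        (b-a).val = n - d1 ∨ (b-a).val = n - d2 ∨ (b-a).val = n - (d1+d2) := by omega
    have memT : ∀ (u x : ZMod n), u ∈ T x ↔
        u = x ∨ u = x + (d1:ZMod n) ∨ u = x + ((d1:ZMod n) + (d2:ZMod n)) := by
      intro u x
      show u ∈ ({x, x + (d1:ZMod n), x + ((d1+d2:ℕ):ZMod n)} : Finset (ZMod n)) ↔ _
      push_cast
      simp [Finset.mem_insert, Finset.mem_singleton]
    rcases hv6 with h | h | h | h | h | h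
    · have hd : b - a = (d1 : ZMod n) := by rw [hcast, h]
      refine ⟨a, ⟨?_, ?_⟩, ?_⟩
      · rw [memT]; left; rfl
      · rw [memT]; right; left; linear_combination hd
      · rintro y ⟨hay, hby⟩
        rw [memT] at hay hby
        rcases hay with h1|h1|h1 <;> rcases hby with h2|h2|h2 <;>
          first
          | linear_combination -h1
          | linear_combination -h2
          | exact absurd (by linear_combination h2 - h1 - hd) z1
          | exact absurd (by linear_combination h1 + hd - h2) z1
          | exact absurd (by linear_combination h2 - h1 - hd) z2
          | exact absurd (by linear_combination h1 + hd - h2) z2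
          | exact absurd (by linear_combination h2 - h1 - hd) z3
          | exact absurd (by linear_combination h1 + hd - h2) z3
          | exact absurd (by linear_combination h2 - h1 - hd) z4
          | exact absurd (by linear_combination h1 + hd - h2) z4
          | exact absurd (by linear_combination h2 - h1 - hd) z5
          | exact absurd (by linear_combination h1 + hd - h2) z5
          | exact absurd (by linear_combination h2 - h1 - hd) z6
          | exact absurd (by linear_combination h1 + hd - h2) z6
          | exact absurd (by linear_combination h2 - h1 - hd) z7
          | exact absurd (by linear_combination h1 + hd - h2) z7
          | exact absurd (by linear_combination h2 - h1 - hd) z8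
          | exact absurd (by linear_combination h1 + hd - h2) z8
          | exact absurd (by linear_combination h2 - h1 - hd) z9
          | exact absurd (by linear_combination h1 + hd - h2) z9
    · have hd : b - a = (d2 : ZMod n) := by rw [hcast, h]
      refine ⟨a - (d1 : ZMod n), ⟨?_, ?_⟩, ?_⟩
      · rw [memT]; right; left; ring
      · rw [memT]; right; right; linear_combination hd
      · rintro y ⟨hay, hby⟩
        rw [memT] at hay hby
        rcases hay with h1|h1|h1 <;> rcases hby with h2|h2|h2 <;>
          first
          | linear_combination -h1
          | linear_combination -h2
          | exact absurd (by linear_combination h2 - h1 - hd) z1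
          | exact absurd (by linear_combination h1 + hd - h2) z1
          | exact absurd (by linear_combination h2 - h1 - hd) z2
          | exact absurd (by linear_combination h1 + hd - h2) z2
          | exact absurd (by linear_combination h2 - h1 - hd) z3
          | exact absurd (by linear_combination h1 + hd - h2) z3
          | exact absurd (by linear_combination h2 - h1 - hd) z4
          | exact absurd (by linear_combination h1 + hd - h2) z4
          | exact absurd (by linear_combination h2 - h1 - hd) z5
          | exact absurd (by linear_combination h1 + hd - h2) z5
          | exact absurd (by linear_combination h2 - h1 - hd) z6
          | exact absurd (by linear_combination h1 + hd - h2) z6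
          | exact absurd (by linear_combination h2 - h1 - hd) z7
          | exact absurd (by linear_combination h1 + hd - h2) z7
          | exact absurd (by linear_combination h2 - h1 - hd) z8
          | exact absurd (by linear_combination h1 + hd - h2) z8
          | exact absurd (by linear_combination h2 - h1 - hd) z9
          | exact absurd (by linear_combination h1 + hd - h2) z9
    · have hd : b - a = (d1 : ZMod n) + (d2 : ZMod n) := by
        rw [hcast, h]; push_cast; ring
      refine ⟨a, ⟨?_, ?_⟩, ?_⟩
      · rw [memT]; left; rfl
      · rw [memT]; right; right; linear_combination hd
      · rintro y ⟨hay, hby⟩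
        rw [memT] at hay hby
        rcases hay with h1|h1|h1 <;> rcases hby with h2|h2|h2 <;>
          first
          | linear_combination -h1
          | linear_combination -h2
          | exact absurd (by linear_combination h2 - h1 - hd) z1
          | exact absurd (by linear_combination h1 + hd - h2) z1
          | exact absurd (by linear_combination h2 - h1 - hd) z2
          | exact absurd (by linear_combination h1 + hd - h2) z2
          | exact absurd (by linear_combination h2 - h1 - hd) z3
          | exact absurd (by linear_combination h1 + hd - h2) z3
          | exact absurd (by linear_combination h2 - h1 - hd) z4
          | exact absurd (by linear_combination h1 + hd - h2) z4
          | exact absurd (by linear_combination h2 - h1 - hd) z5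
          | exact absurd (by linear_combination h1 + hd - h2) z5
          | exact absurd (by linear_combination h2 - h1 - hd) z6
          | exact absurd (by linear_combination h1 + hd - h2) z6
          | exact absurd (by linear_combination h2 - h1 - hd) z7
          | exact absurd (by linear_combination h1 + hd - h2) z7
          | exact absurd (by linear_combination h2 - h1 - hd) z8
          | exact absurd (by linear_combination h1 + hd - h2) z8
          | exact absurd (by linear_combination h2 - h1 - hd) z9
          | exact absurd (by linear_combination h1 + hd - h2) z9
    · have hd : b - a = -(d1 : ZMod n) := by rw [hcast, h, castsub n (by omega)]
      refine ⟨b, ⟨?_, ?_⟩, ?_⟩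
      · rw [memT]; right; left; linear_combination -hd
      · rw [memT]; left; rfl
      · rintro y ⟨hay, hby⟩
        rw [memT] at hay hby
        rcases hay with h1|h1|h1 <;> rcases hby with h2|h2|h2 <;>
          first
          | linear_combination -h1
          | linear_combination -h2
          | exact absurd (by linear_combination h2 - h1 - hd) z1
          | exact absurd (by linear_combination h1 + hd - h2) z1
          | exact absurd (by linear_combination h2 - h1 - hd) z2
          | exact absurd (by linear_combination h1 + hd - h2) z2
          | exact absurd (by linear_combination h2 - h1 - hd) z3
          | exact absurd (by linear_combination h1 + hd - h2) z3
          | exact absurd (by linear_combination h2 - h1 - hd) z4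
          | exact absurd (by linear_combination h1 + hd - h2) z4
          | exact absurd (by linear_combination h2 - h1 - hd) z5
          | exact absurd (by linear_combination h1 + hd - h2) z5
          | exact absurd (by linear_combination h2 - h1 - hd) z6
          | exact absurd (by linear_combination h1 + hd - h2) z6
          | exact absurd (by linear_combination h2 - h1 - hd) z7
          | exact absurd (by linear_combination h1 + hd - h2) z7
          | exact absurd (by linear_combination h2 - h1 - hd) z8
          | exact absurd (by linear_combination h1 + hd - h2) z8
          | exact absurd (by linear_combination h2 - h1 - hd) z9
          | exact absurd (by linear_combination h1 + hd - h2) z9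
    · have hd : b - a = -(d2 : ZMod n) := by rw [hcast, h, castsub n (by omega)]
      refine ⟨a - ((d1 : ZMod n) + (d2 : ZMod n)), ⟨?_, ?_⟩, ?_⟩
      · rw [memT]; right; right; ring
      · rw [memT]; right; left; linear_combination hd
      · rintro y ⟨hay, hby⟩
        rw [memT] at hay hby
        rcases hay with h1|h1|h1 <;> rcases hby with h2|h2|h2 <;>
          first
          | linear_combination -h1
          | linear_combination -h2
          | exact absurd (by linear_combination h2 - h1 - hd) z1
          | exact absurd (by linear_combination h1 + hd - h2) z1
          | exact absurd (by linear_combination h2 - h1 - hd) z2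
          | exact absurd (by linear_combination h1 + hd - h2) z2
          | exact absurd (by linear_combination h2 - h1 - hd) z3
          | exact absurd (by linear_combination h1 + hd - h2) z3
          | exact absurd (by linear_combination h2 - h1 - hd) z4
          | exact absurd (by linear_combination h1 + hd - h2) z4
          | exact absurd (by linear_combination h2 - h1 - hd) z5
          | exact absurd (by linear_combination h1 + hd - h2) z5
          | exact absurd (by linear_combination h2 - h1 - hd) z6
          | exact absurd (by linear_combination h1 + hd - h2) z6
          | exact absurd (by linear_combination h2 - h1 - hd) z7
          | exact absurd (by linear_combination h1 + hd - h2) z7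
          | exact absurd (by linear_combination h2 - h1 - hd) z8
          | exact absurd (by linear_combination h1 + hd - h2) z8
          | exact absurd (by linear_combination h2 - h1 - hd) z9
          | exact absurd (by linear_combination h1 + hd - h2) z9
    · have hd : b - a = -((d1 : ZMod n) + (d2 : ZMod n)) := by
        rw [hcast, h, castsub n (by omega)]; push_cast; ring
      refine ⟨b, ⟨?_, ?_⟩, ?_⟩
      · rw [memT]; right; right; linear_combination -hd
      · rw [memT]; left; rfl
      · rintro y ⟨hay, hby⟩
        rw [memT] at hay hby
        rcases hay with h1|h1|h1 <;> rcases hby with h2|h2|h2 <;>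
          first
          | linear_combination -h1
          | linear_combination -h2
          | exact absurd (by linear_combination h2 - h1 - hd) z1
          | exact absurd (by linear_combination h1 + hd - h2) z1
          | exact absurd (by linear_combination h2 - h1 - hd) z2
          | exact absurd (by linear_combination h1 + hd - h2) z2
          | exact absurd (by linear_combination h2 - h1 - hd) z3
          | exact absurd (by linear_combination h1 + hd - h2) z3
          | exact absurd (by linear_combination h2 - h1 - hd) z4
          | exact absurd (by linear_combination h1 + hd - h2) z4
          | exact absurd (by linear_combination h2 - h1 - hd) z5
          | exact absurd (by linear_combination h1 + hd - h2) z5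
          | exact absurd (by linear_combination h2 - h1 - hd) z6
          | exact absurd (by linear_combination h1 + hd - h2) z6
          | exact absurd (by linear_combination h2 - h1 - hd) z7
          | exact absurd (by linear_combination h1 + hd - h2) z7
          | exact absurd (by linear_combination h2 - h1 - hd) z8
          | exact absurd (by linear_combination h1 + hd - h2) z8
          | exact absurd (by linear_combination h2 - h1 - hd) z9
          | exact absurd (by linear_combination h1 + hd - h2) z9
end
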